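/- arXiv:1901.03504 — 5 statements merged into one kernel-verified Lean document; each statement's English description precedes it below -/
import Mathlib

section
/- Let Ω be a compact metric space and μ a non-atomic (continuous) Borel probability measure on Ω. Let g : Ω → ℝ be a step function (taking finitely many values, each on a Borel set) with ∫ g dμ = 0, and let δ > 0. Then there exists a continuous function f : Ω → ℝ with ∫ f dμ = 0, ‖f‖∞ ≤ 2‖g‖∞, and μ({x : f(x) ≠ g(x)}) ≤ δ. -/
open MeasureTheory
open scoped ENNReal

theorem stmt0 {Ω : Type*} [MetricSpace Ω] [CompactSpace Ω] [MeasurableSpace Ω] [BorelSpace Ω]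
    (μ : Measure Ω) [IsProbabilityMeasure μ] (hcont : ∀ x : Ω, μ {x} = 0)
    (g : Ω → ℝ) (hrange : (Set.range g).Finite) (hmeas : Measurable g)
    (hmean : ∫ x, g x ∂μ = 0) (δ : ℝ) (hδ : 0 < δ) :
    ∃ f : C(Ω, ℝ), (∫ x, f x ∂μ = 0) ∧ ‖f‖ ≤ 2 * (⨆ x, |g x|) ∧
      μ {x | f x ≠ g x} ≤ ENNReal.ofReal δ := by
  classical
  -- basic setup
  have hΩ : Nonempty Ω := by
    by_contra h
    rw [not_nonempty_iff] at h
    have h1 : μ Set.univ = 1 := measure_univ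
    rw [Set.univ_eq_empty_iff.2 h, measure_empty] at h1
    exact zero_ne_one h1
  have hci : ∀ f : C(Ω, ℝ), Integrable (fun x => f x) μ := fun f =>
    f.continuous.integrable_of_hasCompactSupport
      (IsCompact.of_isClosed_subset isCompact_univ (isClosed_tsupport _) (Set.subset_univ _))
  set M : ℝ := ⨆ x, |g x| with hMdef
  have hbdd : BddAbove (Set.range fun x => |g x|) := by
    have he : (Set.range fun x => |g x|) = abs '' Set.range g := by
      rw [← Set.range_comp]; rfl
    rw [he]; exact (hrange.image _).bddAbove
  have hM0 : 0 ≤ M := Real.iSup_nonneg fun x => abs_nonneg _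
  have hMb : ∀ x, |g x| ≤ M := fun x => le_ciSup hbdd x
  have hVb : ∀ c ∈ Set.range g, |c| ≤ M := by rintro c ⟨y, rfl⟩; exact hMb y
  have hgint : Integrable g μ := (integrable_const M).mono' hmeas.aestronglyMeasurable
    (Filter.Eventually.of_forall fun x => by simpa [Real.norm_eq_abs] using hMb x)
  set s : ℝ := min δ 1 with hsdef
  have hs0 : 0 < s := lt_min hδ one_pos
  have hsδ : s ≤ δ := min_le_left _ _
  -- a point of positive local measure
  have hsupp : ∃ x₀ : Ω, ∀ r > (0:ℝ), 0 < μ (Metric.ball x₀ r) := by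
    by_contra hcon
    push_neg at hcon
    choose r hrpos hrle using hcon
    obtain ⟨t, ht⟩ := isCompact_univ.elim_finite_subcover
      (fun x : Ω => Metric.ball x (r x)) (fun x => Metric.isOpen_ball)
      (fun y _ => Set.mem_iUnion.2 ⟨y, Metric.mem_ball_self (hrpos y)⟩)
    have h1 : (1 : ℝ≥0∞) ≤ 0 := by
      calc (1 : ℝ≥0∞) = μ Set.univ := measure_univ.symm
        _ ≤ ∑ x ∈ t, μ (Metric.ball x (r x)) :=
          (measure_mono ht).trans (measure_biUnion_finset_le t _)
        _ = 0 := Finset.sum_eq_zero fun x _ => le_antisymm (hrle x) zero_le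
    simp at h1
  obtain ⟨x₀, hx₀⟩ := hsupp
  -- a small ball around x₀
  have hball : ∃ r > (0:ℝ), μ (Metric.closedBall x₀ r) < ENNReal.ofReal (3 * s / 4) := by
    have hT := tendsto_measure_cthickening (μ := μ) (s := ({x₀} : Set Ω))
      ⟨1, by norm_num, measure_ne_top μ _⟩
    rw [closure_singleton, hcont x₀] at hT
    have hev : ∀ᶠ r in nhds (0:ℝ), μ (Metric.cthickening r {x₀}) < ENNReal.ofReal (3 * s / 4) :=
      hT.eventually_lt_const (by simp [ENNReal.ofReal_pos]; linarith)
    rw [Metric.eventually_nhds_iff] at hev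
    obtain ⟨ε, hε, hb⟩ := hev
    refine ⟨ε / 2, by linarith, ?_⟩
    refine lt_of_le_of_lt (measure_mono (Metric.closedBall_subset_cthickening_singleton x₀ _)) ?_
    apply hb
    rw [Real.dist_eq, sub_zero, abs_of_pos (by linarith)]; linarith
  obtain ⟨r₀, hr₀, hr₀μ⟩ := hball
  set β : ℝ := (μ (Metric.closedBall x₀ (r₀ / 2))).toReal with hβdef
  have hβ0 : 0 < β := ENNReal.toReal_pos
    (ne_of_gt (lt_of_lt_of_le (hx₀ (r₀ / 2) (by linarith))
      (measure_mono Metric.ball_subset_closedBall))) (measure_ne_top μ _)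
  -- the bump function
  obtain ⟨hb, hb0, hb1, hbm⟩ := exists_continuous_zero_one_of_isClosed
    (Metric.isOpen_ball (x := x₀) (ε := r₀)).isClosed_compl Metric.isClosed_closedBall
    (Set.disjoint_left.mpr fun x hx hx2 =>
      hx (Metric.closedBall_subset_ball (show r₀ / 2 < r₀ by linarith) hx2))
  have hIb : β ≤ ∫ x, hb x ∂μ := by
    have hpt : ∀ x, (Metric.closedBall x₀ (r₀ / 2)).indicator (fun _ => (1:ℝ)) x ≤ hb x := by
      intro x
      by_cases hx : x ∈ Metric.closedBall x₀ (r₀ / 2)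
      · rw [Set.indicator_of_mem hx]
        exact le_of_eq (hb1 hx).symm
      · rw [Set.indicator_of_notMem hx]
        exact (hbm x).1
    calc β = (μ (Metric.closedBall x₀ (r₀ / 2))).toReal • (1:ℝ) := by rw [smul_eq_mul, mul_one]
      _ = ∫ x, (Metric.closedBall x₀ (r₀ / 2)).indicator (fun _ => (1:ℝ)) x ∂μ :=
        (integral_indicator_const _ Metric.isClosed_closedBall.measurableSet).symm
      _ ≤ ∫ x, hb x ∂μ := integral_mono
        ((integrable_const (1:ℝ)).indicator Metric.isClosed_closedBall.measurableSet) (hci hb) hpt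
  have hIb0 : 0 < ∫ x, hb x ∂μ := lt_of_lt_of_le hβ0 hIb
  have hbabs : ∀ x, |hb x| ≤ 1 := fun x =>
    abs_le.mpr ⟨by linarith [(hbm x).1], (hbm x).2⟩
  -- the step sets and their closed approximations
  set V : Finset ℝ := hrange.toFinset with hVdef
  have hVmem : ∀ x, g x ∈ V := fun x => hrange.mem_toFinset.2 ⟨x, rfl⟩
  set n : ℕ := V.card with hndef
  have hn0 : 0 < n := Finset.card_pos.2 ⟨g (Classical.arbitrary Ω), hVmem _⟩
  set m : ℝ := min (s / 8) (β / 2) with hmdef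
  have hm0 : 0 < m := lt_min (by linarith) (by linarith)
  have hε'ne : ENNReal.ofReal (m / n) ≠ 0 := by
    simp [ENNReal.ofReal_pos]
    positivity
  have hFs : ∀ c : ℝ, ∃ F, F ⊆ g ⁻¹' {c} ∧ IsClosed F ∧
      μ (g ⁻¹' {c} \ F) < ENNReal.ofReal (m / n) :=
    fun c => (hmeas (measurableSet_singleton c)).exists_isClosed_diff_lt
      (measure_ne_top μ _) hε'ne
  choose F hFsub hFcl hFlt using hFs
  have hFg : ∀ c, ∀ x ∈ F c, g x = c := fun c x hx => hFsub c hx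
  set K : Set Ω := ⋃ c ∈ V, F c with hKdef
  have hKmeas : MeasurableSet K :=
    (Set.Finite.isClosed_biUnion V.finite_toSet fun c _ => hFcl c).measurableSet
  have hKc : μ Kᶜ ≤ ENNReal.ofReal m := by
    have hsub : Kᶜ ⊆ ⋃ c ∈ V, (g ⁻¹' {c} \ F c) := by
      intro x hx
      refine Set.mem_biUnion (hVmem x) ⟨rfl, fun hxF => hx ?_⟩
      exact Set.mem_biUnion (hVmem x) hxF
    calc μ Kᶜ ≤ ∑ c ∈ V, μ (g ⁻¹' {c} \ F c) :=
        (measure_mono hsub).trans (measure_biUnion_finset_le V _)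
      _ ≤ ∑ _c ∈ V, ENNReal.ofReal (m / n) := Finset.sum_le_sum fun c _ => (hFlt c).le
      _ = (n : ℝ≥0∞) * ENNReal.ofReal (m / n) := by rw [Finset.sum_const, nsmul_eq_mul]
      _ = ENNReal.ofReal m := by
        rw [← ENNReal.ofReal_natCast, ← ENNReal.ofReal_mul (Nat.cast_nonneg n)]
        congr 1
        field_simp
  have hKcR : (μ Kᶜ).toReal ≤ m := by
    have := ENNReal.toReal_mono ENNReal.ofReal_ne_top hKc
    rwa [ENNReal.toReal_ofReal hm0.le] at this
  -- disjoint open thickenings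
  have hFdis : ∀ c c' : ℝ, c ≠ c' → Disjoint (F c) (F c') := by
    intro c c' hne
    refine Set.disjoint_left.mpr fun x hx hx' => hne ?_
    rw [← hFg c x hx, hFg c' x hx']
  have hρex : ∀ p : ℝ × ℝ, ∃ ρ, 0 < ρ ∧ (p.1 ≠ p.2 →
      Disjoint (Metric.thickening ρ (F p.1)) (Metric.thickening ρ (F p.2))) := by
    intro p
    by_cases hp : p.1 = p.2
    · exact ⟨1, one_pos, fun h => absurd hp h⟩
    · obtain ⟨ρ, hρ0, hd⟩ := (hFdis p.1 p.2 hp).exists_thickenings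
        (IsCompact.of_isClosed_subset isCompact_univ (hFcl p.1) (Set.subset_univ _))
        (hFcl p.2)
      exact ⟨ρ, hρ0, fun _ => hd⟩
  choose ρ hρ0 hρd using hρex
  set T : Finset ℝ := insert (1:ℝ) ((V ×ˢ V).image ρ) with hTdef
  have hTne : T.Nonempty := ⟨1, Finset.mem_insert_self _ _⟩
  set rad : ℝ := T.min' hTne with hraddef
  have hrad0 : 0 < rad := by
    have hmem := T.min'_mem hTne
    rw [← hraddef] at hmem
    rw [hTdef] at hmem
    rcases Finset.mem_insert.mp hmem with h | h
    · rw [h]; exact one_pos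
    · obtain ⟨p, _, hp⟩ := Finset.mem_image.mp h
      rw [← hp]; exact hρ0 p
  have hradle : ∀ p ∈ V ×ˢ V, rad ≤ ρ p := fun p hp =>
    Finset.min'_le T _ (Finset.mem_insert_of_mem (Finset.mem_image_of_mem ρ hp))
  set U : ℝ → Set Ω := fun c => Metric.thickening rad (F c) with hUdef
  have hFU : ∀ c, F c ⊆ U c := fun c => Metric.self_subset_thickening hrad0 _
  have hUdis : ∀ c ∈ V, ∀ c' ∈ V, c ≠ c' → Disjoint (U c) (U c') := by
    intro c hc c' hc' hne
    have hle := hradle (c, c') (Finset.mem_product.mpr ⟨hc, hc'⟩)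
    exact (hρd (c, c') hne).mono (Metric.thickening_mono hle _) (Metric.thickening_mono hle _)
  -- Urysohn functions for each level
  have hφex : ∀ c : ℝ, ∃ φ : C(Ω, ℝ), Set.EqOn φ 0 (U c)ᶜ ∧ Set.EqOn φ 1 (F c) ∧
      ∀ x, φ x ∈ Set.Icc (0:ℝ) 1 :=
    fun c => exists_continuous_zero_one_of_isClosed
      Metric.isOpen_thickening.isClosed_compl (hFcl c)
      (Set.disjoint_left.mpr fun x hx hx' => hx (hFU c hx'))
  choose φ hφ0 hφ1 hφm using hφex
  have hφ0' : ∀ c x, x ∉ U c → φ c x = 0 := fun c x hx => hφ0 c hx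
  have hφ1' : ∀ c, ∀ x ∈ F c, φ c x = 1 := fun c x hx => hφ1 c hx
  have hφabs : ∀ c x, |φ c x| ≤ 1 := fun c x =>
    abs_le.mpr ⟨by linarith [(hφm c x).1], (hφm c x).2⟩
  -- the approximating function f₀
  set f₀ : C(Ω, ℝ) := ⟨fun x => ∑ c ∈ V, c * φ c x,
    continuous_finset_sum _ fun c _ => continuous_const.mul (φ c).continuous⟩ with hf₀def
  have hf₀app : ∀ x, f₀ x = ∑ c ∈ V, c * φ c x := fun x => rfl
  have hf₀K : ∀ x ∈ K, f₀ x = g x := by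
    intro x hx
    rw [hKdef, Set.mem_iUnion₂] at hx
    obtain ⟨c, hcV, hxF⟩ := hx
    rw [hf₀app, Finset.sum_eq_single_of_mem c hcV]
    · rw [hφ1' c x hxF, mul_one, hFg c x hxF]
    · intro c' hc' hne
      rw [hφ0' c' x fun hxU => Set.disjoint_left.mp (hUdis c' hc' c hcV hne) hxU (hFU c hxF),
        mul_zero]
  have hf₀bd : ∀ x, |f₀ x| ≤ M := by
    intro x
    rw [hf₀app]
    by_cases hx : ∃ c ∈ V, x ∈ U c
    · obtain ⟨c, hcV, hxU⟩ := hx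
      rw [Finset.sum_eq_single_of_mem c hcV fun c' hc' hne => by
        rw [hφ0' c' x fun hxU' =>
          Set.disjoint_left.mp (hUdis c' hc' c hcV hne) hxU' hxU, mul_zero]]
      calc |c * φ c x| = |c| * |φ c x| := abs_mul _ _
        _ ≤ M * 1 := mul_le_mul (hVb c (hrange.mem_toFinset.1 hcV)) (hφabs c x)
            (abs_nonneg _) hM0
        _ = M := mul_one M
    · push_neg at hx
      rw [Finset.sum_eq_zero fun c hc => by rw [hφ0' c x (hx c hc), mul_zero]]
      simpa using hM0
  -- integral bound for f₀
  have hIf₀ : |∫ x, f₀ x ∂μ| ≤ 2 * M * (μ Kᶜ).toReal := by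
    have h1 : ∫ x, f₀ x ∂μ = ∫ x, (f₀ x - g x) ∂μ := by
      rw [integral_sub (hci f₀) hgint, hmean, sub_zero]
    rw [h1]
    have h2 : ∀ x, |f₀ x - g x| ≤ Kᶜ.indicator (fun _ => 2 * M) x := by
      intro x
      by_cases hx : x ∈ K
      · rw [Set.indicator_of_notMem (by simpa using hx), hf₀K x hx, sub_self, abs_zero]
      · rw [Set.indicator_of_mem (by simpa using hx)]
        calc |f₀ x - g x| ≤ |f₀ x| + |g x| := abs_sub _ _
          _ ≤ M + M := add_le_add (hf₀bd x) (hMb x)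
          _ = 2 * M := by ring
    have h3 : |∫ x, (f₀ x - g x) ∂μ| ≤ ∫ x, |f₀ x - g x| ∂μ := by
      simpa [Real.norm_eq_abs] using
        norm_integral_le_integral_norm (μ := μ) (f := fun x => f₀ x - g x)
    calc |∫ x, (f₀ x - g x) ∂μ| ≤ ∫ x, |f₀ x - g x| ∂μ := h3
      _ ≤ ∫ x, Kᶜ.indicator (fun _ => 2 * M) x ∂μ := integral_mono
          (((hci f₀).sub hgint).abs) ((integrable_const _).indicator hKmeas.compl) h2
      _ = (μ Kᶜ).toReal • (2 * M) := integral_indicator_const _ hKmeas.compl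
      _ = 2 * M * (μ Kᶜ).toReal := by rw [smul_eq_mul, mul_comm]
  have hIf₀' : |∫ x, f₀ x ∂μ| ≤ M * ∫ x, hb x ∂μ := by
    calc |∫ x, f₀ x ∂μ| ≤ 2 * M * (μ Kᶜ).toReal := hIf₀
      _ ≤ 2 * M * (β / 2) := by
        apply mul_le_mul_of_nonneg_left _ (by linarith)
        exact hKcR.trans (min_le_right _ _)
      _ = M * β := by ring
      _ ≤ M * ∫ x, hb x ∂μ := mul_le_mul_of_nonneg_left hIb hM0
  -- the final function
  set t : ℝ := -(∫ x, f₀ x ∂μ) / (∫ x, hb x ∂μ) with htdef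
  have ht : |t| ≤ M := by
    rw [htdef, abs_div, abs_neg, abs_of_pos hIb0, div_le_iff₀ hIb0]
    exact hIf₀'
  refine ⟨f₀ + t • hb, ?_, ?_, ?_⟩
  · have happ : ∀ x, (f₀ + t • hb) x = f₀ x + t * hb x := fun x => rfl
    simp only [happ]
    rw [integral_add (hci f₀) ((hci hb).const_mul t), integral_const_mul, htdef,
      div_mul_cancel₀ _ (ne_of_gt hIb0)]
    ring
  · refine (ContinuousMap.norm_le _ (by linarith)).2 fun x => ?_
    have happ : (f₀ + t • hb) x = f₀ x + t * hb x := rfl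
    rw [happ, Real.norm_eq_abs]
    calc |f₀ x + t * hb x| ≤ |f₀ x| + |t * hb x| := abs_add_le _ _
      _ ≤ M + M * 1 := add_le_add (hf₀bd x) (by
          rw [abs_mul]
          exact mul_le_mul ht (hbabs x) (abs_nonneg _) hM0)
      _ = 2 * M := by ring
  · have hsub : {x | (f₀ + t • hb) x ≠ g x} ⊆ Kᶜ ∪ Metric.ball x₀ r₀ := by
      intro x hx
      by_contra hcon
      rw [Set.mem_union] at hcon
      push_neg at hcon
      obtain ⟨hxK, hxB⟩ := hcon
      have hxK' : x ∈ K := by simpa using hxK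
      have hb0x : hb x = 0 := hb0 hxB
      have : (f₀ + t • hb) x = f₀ x + t * hb x := rfl
      rw [Set.mem_setOf_eq, this, hb0x, mul_zero, add_zero, hf₀K x hxK'] at hx
      exact hx rfl
    calc μ {x | (f₀ + t • hb) x ≠ g x} ≤ μ (Kᶜ ∪ Metric.ball x₀ r₀) := measure_mono hsub
      _ ≤ μ Kᶜ + μ (Metric.ball x₀ r₀) := measure_union_le _ _
      _ ≤ ENNReal.ofReal m + ENNReal.ofReal (3 * s / 4) := by
        refine add_le_add hKc ?_
        exact le_of_lt (lt_of_le_of_lt (measure_mono Metric.ball_subset_closedBall) hr₀μ)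
      _ ≤ ENNReal.ofReal δ := by
        rw [← ENNReal.ofReal_add hm0.le (by linarith)]
        apply ENNReal.ofReal_le_ofReal
        have hm8 : m ≤ s / 8 := min_le_left _ _
        linarith
end

section
/- Let X₁, …, X_N be orthonormal real random variables on a probability space and c₁, …, c_N real numbers. Then E[ max_{1 ≤ n ≤ N} (∑_{j=1}^n c_j X_j)² ] ≤ (log₂(4N))² · ∑_{n=1}^N c_n². -/
open MeasureTheory Finset

/-- Telescoping dyadic decomposition. -/
lemma MR_tele (f : ℕ → ℝ) (n : ℕ) : ∀ K : ℕ,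
    ∑ k ∈ range K, ∑ j ∈ Ioc (2^(k+1) * (n / 2^(k+1))) (2^k * (n / 2^k)), f j
      = ∑ j ∈ Ioc (2^K * (n / 2^K)) n, f j := by
  intro K
  induction K with
  | zero => simp
  | succ K ih =>
    have e : n / 2^(K+1) = (n / 2^K) / 2 := by
      rw [pow_succ, Nat.div_div_eq_div_mul]
    have h2 : 2^K * (n / 2^K) ≤ n := by
      calc 2^K * (n / 2^K) = n / 2^K * 2^K := by ring
      _ ≤ n := Nat.div_mul_le_self n (2^K)
    have h1 : 2^(K+1) * (n / 2^(K+1)) ≤ 2^K * (n / 2^K) := by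
      rw [e, pow_succ]
      have : 2 * ((n / 2^K) / 2) ≤ n / 2^K := by omega
      calc 2^K * 2 * (n / 2^K / 2) = 2^K * (2 * (n / 2^K / 2)) := by ring
      _ ≤ 2^K * (n / 2^K) := Nat.mul_le_mul_left _ this
    rw [Finset.sum_range_succ, ih, add_comm]
    exact Finset.sum_Ioc_consecutive f h1 h2

/-- Each dyadic piece is among the full-block squares. -/
lemma MR_level (f : ℕ → ℝ) (n k : ℕ) :
    (∑ j ∈ Ioc (2^(k+1) * (n / 2^(k+1))) (2^k * (n / 2^k)), f j)^2
      ≤ ∑ m ∈ range (n / 2^k), (∑ j ∈ Ioc (m * 2^k) ((m+1) * 2^k), f j)^2 := by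
  have e : n / 2^(k+1) = (n / 2^k) / 2 := by
    rw [pow_succ, Nat.div_div_eq_div_mul]
  rcases Nat.even_or_odd (n / 2^k) with ⟨q, hq⟩ | ⟨q, hq⟩
  · have h : 2^(k+1) * (n / 2^(k+1)) = 2^k * (n / 2^k) := by
      have hdiv : (n / 2^k) / 2 = q := by omega
      rw [e, hdiv, hq, pow_succ]; ring
    rw [h, Finset.Ioc_self, Finset.sum_empty]
    simpa using Finset.sum_nonneg fun m (_ : m ∈ range (n / 2^k)) => sq_nonneg
      ((∑ j ∈ Ioc (m * 2^k) ((m+1) * 2^k), f j))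
  · have hdiv : (n / 2^k) / 2 = q := by omega
    have e2 : 2^(k+1) * (n / 2^(k+1)) = (2*q) * 2^k := by
      rw [e, hdiv, pow_succ]; ring
    have e3 : 2^k * (n / 2^k) = (2*q+1) * 2^k := by rw [hq]; ring
    rw [e2, e3]
    have hmem : 2*q ∈ range (n / 2^k) := by
      rw [hq]; exact mem_range.2 (by omega)
    have := Finset.single_le_sum
      (f := fun m => (∑ j ∈ Ioc (m * 2^k) ((m+1) * 2^k), f j)^2)
      (fun m _ => sq_nonneg _) hmem
    simpa using this

/-- Pointwise Menshov–Rademacher bound. -/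
lemma MR_pointwise (f : ℕ → ℝ) (N n L : ℕ) (hnN : n ≤ N) (hL : N ≤ 2^L) :
    (∑ j ∈ Icc 1 n, f j)^2
      ≤ ((L:ℝ)+1) * ∑ k ∈ range (L+1), ∑ m ∈ range (N / 2^k),
          (∑ j ∈ Ioc (m * 2^k) ((m+1) * 2^k), f j)^2 := by
  have hsmall : n / 2^(L+1) = 0 := by
    apply Nat.div_eq_of_lt
    calc n ≤ N := hnN
    _ ≤ 2^L := hL
    _ < 2^(L+1) := by have := Nat.one_le_two_pow (n := L); rw [pow_succ]; omega
  have htele := MR_tele f n (L+1)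
  rw [hsmall, Nat.mul_zero] at htele
  have hIcc : ∑ j ∈ Icc 1 n, f j = ∑ j ∈ Ioc 0 n, f j := by
    congr 1
  calc (∑ j ∈ Icc 1 n, f j)^2
      = (∑ k ∈ range (L+1), ∑ j ∈ Ioc (2^(k+1) * (n / 2^(k+1))) (2^k * (n / 2^k)), f j)^2 := by
        rw [htele, hIcc]
    _ ≤ ((range (L+1)).card : ℝ) * ∑ k ∈ range (L+1),
          (∑ j ∈ Ioc (2^(k+1) * (n / 2^(k+1))) (2^k * (n / 2^k)), f j)^2 :=
        sq_sum_le_card_mul_sum_sq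
    _ ≤ ((L:ℝ)+1) * ∑ k ∈ range (L+1), ∑ m ∈ range (N / 2^k),
          (∑ j ∈ Ioc (m * 2^k) ((m+1) * 2^k), f j)^2 := by
        rw [Finset.card_range]
        push_cast
        apply mul_le_mul_of_nonneg_left _ (by positivity)
        apply Finset.sum_le_sum
        intro k _
        calc (∑ j ∈ Ioc (2^(k+1) * (n / 2^(k+1))) (2^k * (n / 2^k)), f j)^2
            ≤ ∑ m ∈ range (n / 2^k), (∑ j ∈ Ioc (m * 2^k) ((m+1) * 2^k), f j)^2 :=
              MR_level f n k
          _ ≤ ∑ m ∈ range (N / 2^k), (∑ j ∈ Ioc (m * 2^k) ((m+1) * 2^k), f j)^2 := by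
              apply Finset.sum_le_sum_of_subset_of_nonneg
              · exact Finset.range_subset_range.2 (Nat.div_le_div_right hnN)
              · intro m _ _; exact sq_nonneg _

/-- Telescoping of blocks at one level. -/
lemma MR_blocks (g : ℕ → ℝ) (w : ℕ) : ∀ t : ℕ,
    ∑ m ∈ range t, ∑ j ∈ Ioc (m * w) ((m+1) * w), g j = ∑ j ∈ Ioc 0 (t * w), g j := by
  intro t
  induction t with
  | zero => simp
  | succ t ih =>
    rw [Finset.sum_range_succ, ih]
    exact Finset.sum_Ioc_consecutive g (Nat.zero_le _) (Nat.mul_le_mul_right w (Nat.le_succ t))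

section Meas
variable {Ω : Type*} [MeasurableSpace Ω] (P : Measure Ω) [IsProbabilityMeasure P]
    (N : ℕ) (X : ℕ → Ω → ℝ) (hmeas : ∀ i, Measurable (X i))
    (horth : ∀ i ∈ Finset.Icc 1 N, ∀ j ∈ Finset.Icc 1 N,
      ∫ ω, X i ω * X j ω ∂P = if i = j then 1 else 0)

include hmeas horth in
lemma MR_int : ∀ i ∈ Finset.Icc 1 N, ∀ j ∈ Finset.Icc 1 N,
    Integrable (fun ω => X i ω * X j ω) P := by
  have hsq : ∀ i ∈ Finset.Icc 1 N, Integrable (fun ω => X i ω * X i ω) P := by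
    intro i hi
    by_contra h
    have h2 := horth i hi i hi
    rw [integral_undef h] at h2
    simp at h2
  intro i hi j hj
  apply Integrable.mono ((hsq i hi).add (hsq j hj))
    (((hmeas i).mul (hmeas j)).aestronglyMeasurable)
  filter_upwards with ω
  simp only [Pi.add_apply, Pi.mul_apply, Real.norm_eq_abs, abs_mul]
  rw [abs_of_nonneg (add_nonneg (mul_self_nonneg (X i ω)) (mul_self_nonneg (X j ω)))]
  nlinarith [sq_nonneg (|X i ω| - |X j ω|), sq_abs (X i ω), sq_abs (X j ω),
    abs_nonneg (X i ω), abs_nonneg (X j ω)]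

include hmeas horth in
lemma MR_block_int (c : ℕ → ℝ) (B : Finset ℕ) (hB : B ⊆ Finset.Icc 1 N) :
    Integrable (fun ω => (∑ j ∈ B, c j * X j ω)^2) P := by
  have key : (fun ω => (∑ j ∈ B, c j * X j ω)^2)
      = fun ω => ∑ i ∈ B, ∑ j ∈ B, (c i * c j) * (X i ω * X j ω) := by
    funext ω
    rw [sq, Finset.sum_mul_sum]
    exact Finset.sum_congr rfl fun i _ => Finset.sum_congr rfl fun j _ => by ring
  rw [key]
  exact integrable_finset_sum _ fun i hi => integrable_finset_sum _ fun j hj =>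
    (MR_int P N X hmeas horth i (hB hi) j (hB hj)).const_mul _

include hmeas horth in
lemma MR_block_eq (c : ℕ → ℝ) (B : Finset ℕ) (hB : B ⊆ Finset.Icc 1 N) :
    ∫ ω, (∑ j ∈ B, c j * X j ω)^2 ∂P = ∑ j ∈ B, (c j)^2 := by
  have key : ∀ ω, (∑ j ∈ B, c j * X j ω)^2
      = ∑ i ∈ B, ∑ j ∈ B, (c i * c j) * (X i ω * X j ω) := by
    intro ω
    rw [sq, Finset.sum_mul_sum]
    exact Finset.sum_congr rfl fun i _ => Finset.sum_congr rfl fun j _ => by ring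
  simp_rw [key]
  rw [integral_finset_sum _ (fun i hi => integrable_finset_sum _ fun j hj =>
    (MR_int P N X hmeas horth i (hB hi) j (hB hj)).const_mul _)]
  have : ∀ i ∈ B, ∫ ω, ∑ j ∈ B, (c i * c j) * (X i ω * X j ω) ∂P
      = ∑ j ∈ B, if i = j then c i * c j else 0 := by
    intro i hi
    rw [integral_finset_sum _ (fun j hj =>
      (MR_int P N X hmeas horth i (hB hi) j (hB hj)).const_mul _)]
    refine Finset.sum_congr rfl fun j hj => ?_
    rw [integral_const_mul, horth i (hB hi) j (hB hj)]
    split <;> simp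
  rw [Finset.sum_congr rfl this]
  refine Finset.sum_congr rfl fun i hi => ?_
  rw [Finset.sum_ite_eq B i (fun j => c i * c j), if_pos hi, sq]
end Meas

theorem stmt5 {Ω : Type*} [MeasurableSpace Ω] (P : Measure Ω) [IsProbabilityMeasure P]
    (N : ℕ) (hN : 1 ≤ N) (X : ℕ → Ω → ℝ) (hmeas : ∀ i, Measurable (X i))
    (horth : ∀ i ∈ Finset.Icc 1 N, ∀ j ∈ Finset.Icc 1 N,
      ∫ ω, X i ω * X j ω ∂P = if i = j then 1 else 0)
    (c : ℕ → ℝ) :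
    ∫ ω, (Finset.Icc 1 N).sup' (Finset.nonempty_Icc.2 hN)
        (fun n => (∑ j ∈ Finset.Icc 1 n, c j * X j ω) ^ 2) ∂P
      ≤ (Real.logb 2 (4 * N)) ^ 2 * ∑ n ∈ Finset.Icc 1 N, (c n) ^ 2 := by
  set L := Nat.clog 2 N with hLdef
  have hL : N ≤ 2^L := Nat.le_pow_clog one_lt_two N
  -- blocks are inside [1, N]
  have hsub : ∀ k, ∀ m ∈ range (N / 2^k), Ioc (m * 2^k) ((m+1) * 2^k) ⊆ Finset.Icc 1 N := by
    intro k m hm j hj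
    rw [Finset.mem_Ioc] at hj
    rw [Finset.mem_range] at hm
    rw [Finset.mem_Icc]
    have h1 := Nat.div_mul_le_self N (2^k)
    have h2 : (m+1) * 2^k ≤ (N / 2^k) * 2^k := Nat.mul_le_mul_right _ (by omega)
    omega
  -- the dominating function
  set G : Ω → ℝ := fun ω => ((L:ℝ)+1) * ∑ k ∈ range (L+1), ∑ m ∈ range (N / 2^k),
      (∑ j ∈ Ioc (m * 2^k) ((m+1) * 2^k), c j * X j ω)^2 with hGdef
  have hGint : Integrable G P := by
    apply Integrable.const_mul
    exact integrable_finset_sum _ fun k _ => integrable_finset_sum _ fun m hm =>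
      MR_block_int P N X hmeas horth c _ (hsub k m hm)
  have hFG : ∀ ω, (Finset.Icc 1 N).sup' (Finset.nonempty_Icc.2 hN)
      (fun n => (∑ j ∈ Finset.Icc 1 n, c j * X j ω) ^ 2) ≤ G ω := by
    intro ω
    apply Finset.sup'_le
    intro n hn
    rw [Finset.mem_Icc] at hn
    exact MR_pointwise (fun j => c j * X j ω) N n L hn.2 hL
  have hF0 : ∀ ω, 0 ≤ (Finset.Icc 1 N).sup' (Finset.nonempty_Icc.2 hN)
      (fun n => (∑ j ∈ Finset.Icc 1 n, c j * X j ω) ^ 2) := by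
    intro ω
    exact le_trans (sq_nonneg _)
      (Finset.le_sup' (f := fun n => (∑ j ∈ Finset.Icc 1 n, c j * X j ω)^2)
        (Finset.mem_Icc.2 ⟨le_refl 1, hN⟩))
  have step1 := integral_mono_of_nonneg (ae_of_all _ hF0) hGint (ae_of_all _ hFG)
  -- compute ∫ G
  have hGval : ∫ ω, G ω ∂P = ((L:ℝ)+1) * ∑ k ∈ range (L+1), ∑ m ∈ range (N / 2^k),
      ∑ j ∈ Ioc (m * 2^k) ((m+1) * 2^k), (c j)^2 := by
    simp only [hGdef]
    rw [integral_const_mul]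
    congr 1
    rw [integral_finset_sum _ (fun k _ => integrable_finset_sum _ fun m hm =>
      MR_block_int P N X hmeas horth c _ (hsub k m hm))]
    refine Finset.sum_congr rfl fun k _ => ?_
    rw [integral_finset_sum _ (fun m hm => MR_block_int P N X hmeas horth c _ (hsub k m hm))]
    exact Finset.sum_congr rfl fun m hm => MR_block_eq P N X hmeas horth c _ (hsub k m hm)
  have hcsum : 0 ≤ ∑ n ∈ Finset.Icc 1 N, (c n)^2 := Finset.sum_nonneg fun n _ => sq_nonneg _
  have hGle : ∫ ω, G ω ∂P ≤ ((L:ℝ)+1)^2 * ∑ n ∈ Finset.Icc 1 N, (c n)^2 := by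
    rw [hGval]
    have hinner : ∀ k ∈ range (L+1), ∑ m ∈ range (N / 2^k),
        ∑ j ∈ Ioc (m * 2^k) ((m+1) * 2^k), (c j)^2 ≤ ∑ n ∈ Finset.Icc 1 N, (c n)^2 := by
      intro k _
      rw [MR_blocks (fun j => (c j)^2) (2^k) (N / 2^k)]
      have : Ioc 0 ((N / 2^k) * 2^k) ⊆ Finset.Icc 1 N := by
        intro j hj
        rw [Finset.mem_Ioc] at hj
        rw [Finset.mem_Icc]
        have h1 := Nat.div_mul_le_self N (2^k)
        omega
      exact Finset.sum_le_sum_of_subset_of_nonneg this fun n _ _ => sq_nonneg _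
    calc ((L:ℝ)+1) * ∑ k ∈ range (L+1), ∑ m ∈ range (N / 2^k),
        ∑ j ∈ Ioc (m * 2^k) ((m+1) * 2^k), (c j)^2
        ≤ ((L:ℝ)+1) * ∑ k ∈ range (L+1), ∑ n ∈ Finset.Icc 1 N, (c n)^2 := by
          apply mul_le_mul_of_nonneg_left (Finset.sum_le_sum hinner) (by positivity)
      _ = ((L:ℝ)+1)^2 * ∑ n ∈ Finset.Icc 1 N, (c n)^2 := by
          rw [Finset.sum_const, Finset.card_range]
          push_cast
          ring
  -- compare with logb
  have hNpos : (0:ℝ) < N := by positivity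
  have hlog4 : Real.logb 2 (4 * N) = 2 + Real.logb 2 N := by
    rw [Real.logb_mul (by norm_num) (by positivity)]
    congr 1
    have : (4:ℝ) = 2^(2:ℕ) := by norm_num
    rw [this, Real.logb_pow, Real.logb_self_eq_one (by norm_num)]
    norm_num
  have hlogb : ((L:ℝ)+1) ≤ Real.logb 2 (4 * N) := by
    rw [hlog4]
    rcases eq_or_lt_of_le hN with h1 | h2
    · have : L = 0 := by rw [hLdef, ← h1]; exact Nat.clog_one_right 2
      rw [this, ← h1]
      norm_num [Real.logb_one]
    · have hL1 : 1 ≤ L := Nat.clog_pos one_lt_two (by omega)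
      have hlt : 2^(L-1) < N := Nat.pow_pred_clog_lt_self one_lt_two (by omega)
      have hcast : ((2:ℝ))^((L-1 : ℕ)) ≤ (N:ℝ) := by
        have := hlt.le
        exact_mod_cast this
      have : ((L-1:ℕ):ℝ) ≤ Real.logb 2 N := by
        calc ((L-1:ℕ):ℝ) = Real.logb 2 ((2:ℝ)^((L-1:ℕ))) := by
              rw [Real.logb_pow, Real.logb_self_eq_one (by norm_num)]; ring
          _ ≤ Real.logb 2 N := Real.logb_le_logb_of_le (by norm_num) (by positivity) hcast
      have hc2 : ((L-1:ℕ):ℝ) = (L:ℝ) - 1 := by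
        have : (L:ℝ) ≥ 1 := by exact_mod_cast hL1
        push_cast [hL1]
        ring
      linarith [hc2 ▸ this]
  have hsq : ((L:ℝ)+1)^2 ≤ (Real.logb 2 (4 * N))^2 := by
    apply pow_le_pow_left₀ (by positivity) hlogb
  calc ∫ ω, (Finset.Icc 1 N).sup' (Finset.nonempty_Icc.2 hN)
        (fun n => (∑ j ∈ Finset.Icc 1 n, c j * X j ω) ^ 2) ∂P
      ≤ ∫ ω, G ω ∂P := step1
    _ ≤ ((L:ℝ)+1)^2 * ∑ n ∈ Finset.Icc 1 N, (c n)^2 := hGle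
    _ ≤ (Real.logb 2 (4 * N))^2 * ∑ n ∈ Finset.Icc 1 N, (c n)^2 :=
        mul_le_mul_of_nonneg_right hsq hcsum
end

section
/- Let α be irrational with continued fraction convergents p_n/q_n. Define Δ₀^{(n)} = [0, {q_n α}) if n is even and [{q_n α}, 1) if n is odd, and Δ_j^{(n)} = Δ₀^{(n)} + jα (mod 1). Then for every n ≥ 1, the intervals Δ_j^{(n)} for 0 ≤ j < q_{n+1} together with Δ_j^{(n+1)} for 0 ≤ j < q_n are pairwise disjoint and their union is the whole circle 𝕋 = ℝ/ℤ. -/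
open scoped Pointwise

/-- The fundamental interval `Δ₀⁽ⁿ⁾` of the Sinai partition, as a subset of the circle. -/
noncomputable def sinaiBase (α : ℝ) (q : ℕ → ℕ) (n : ℕ) : Set UnitAddCircle :=
  (fun x : ℝ => (x : UnitAddCircle)) ''
    (if Even n then Set.Ico (0 : ℝ) (Int.fract (q n * α)) else Set.Ico (Int.fract (q n * α)) 1)

/-- The translated interval `Δⱼ⁽ⁿ⁾ = Δ₀⁽ⁿ⁾ + jα`. -/
noncomputable def sinaiInterval (α : ℝ) (q : ℕ → ℕ) (n j : ℕ) : Set UnitAddCircle :=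
  (fun x : UnitAddCircle => x + j • ((α : ℝ) : UnitAddCircle)) '' sinaiBase α q n

namespace SinaiAux

open Set GenContFract

noncomputable def phi : ℝ →+ UnitAddCircle := QuotientAddGroup.mk' _

lemma phi_eq (x : ℝ) : phi x = (x : UnitAddCircle) := rfl

lemma phi_int (k : ℤ) : phi (k : ℝ) = 0 :=
  (QuotientAddGroup.eq_zero_iff _).2 ⟨k, by simp⟩

lemma phi_add_int (x : ℝ) (k : ℤ) : phi (x + (k : ℝ)) = phi x := by
  rw [map_add, phi_int, add_zero]

lemma phi_image_shift (s : Set ℝ) (k : ℤ) :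
    phi '' ((fun x => x + (k : ℝ)) '' s) = phi '' s := by
  rw [Set.image_image]
  exact Set.image_congr fun x _ => phi_add_int x k

lemma disjoint_phi_image {s t : Set ℝ} (hs : s ⊆ Ico 0 1) (ht : t ⊆ Ico 0 1)
    (h : Disjoint s t) : Disjoint (phi '' s) (phi '' t) := by
  rw [Set.disjoint_left] at h ⊢
  rintro _ ⟨x, hx, rfl⟩ ⟨y, hy, hxy⟩
  have hx' : x ∈ Ico (0 : ℝ) (0 + 1) := by simpa using hs hx
  have hy' : y ∈ Ico (0 : ℝ) (0 + 1) := by simpa using ht hy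
  have : x = y := (AddCircle.coe_eq_coe_iff_of_mem_Ico hx' hy').1 hxy.symm
  exact h hx (this ▸ hy)

lemma phi_image_Ico01 : phi '' Ico (0 : ℝ) 1 = univ := by
  have h := AddCircle.coe_image_Ico_eq (1 : ℝ) 0
  simp only [zero_add] at h
  exact h

lemma unionIco (x d : ℝ) (hd : 0 ≤ d) :
    ∀ N : ℕ, (⋃ j ∈ Finset.range N, Ico (x + j * d) (x + j * d + d)) = Ico x (x + N * d) := by
  intro N
  induction N with
  | zero => simp
  | succ N ih =>
      rw [Finset.range_add_one, Finset.set_biUnion_insert, ih, Set.union_comm,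
        show x + (N : ℝ) * d + d = x + ((N : ℕ) + 1 : ℕ) * d by push_cast; ring,
        Ico_union_Ico_eq_Ico]
      · nlinarith [Nat.cast_nonneg (α := ℝ) N]
      · push_cast; nlinarith [Nat.cast_nonneg (α := ℝ) N]

lemma unionIcoDesc (y d : ℝ) (hd : 0 ≤ d) :
    ∀ a : ℕ, (⋃ i ∈ Finset.range a, Ico (y - i * d - d) (y - i * d)) = Ico (y - a * d) y := by
  intro a
  induction a with
  | zero => simp
  | succ a ih =>
      rw [Finset.range_add_one, Finset.set_biUnion_insert, ih,
        show y - (a : ℝ) * d - d = y - ((a : ℕ) + 1 : ℕ) * d by push_cast; ring,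
        Ico_union_Ico_eq_Ico]
      · push_cast; nlinarith [Nat.cast_nonneg (α := ℝ) a]
      · nlinarith [Nat.cast_nonneg (α := ℝ) a]

/-- The partition statement at level `n`. -/
def Part (α : ℝ) (q : ℕ → ℕ) (n : ℕ) : Prop :=
  (∀ j < q (n + 1), ∀ j' < q (n + 1), j ≠ j' →
      Disjoint (sinaiInterval α q n j) (sinaiInterval α q n j')) ∧
  (∀ j < q n, ∀ j' < q n, j ≠ j' →
      Disjoint (sinaiInterval α q (n + 1) j) (sinaiInterval α q (n + 1) j')) ∧
  (∀ j < q (n + 1), ∀ j' < q n,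
      Disjoint (sinaiInterval α q n j) (sinaiInterval α q (n + 1) j')) ∧
  ((⋃ j ∈ Finset.range (q (n + 1)), sinaiInterval α q n j) ∪
      (⋃ j ∈ Finset.range (q n), sinaiInterval α q (n + 1) j) = Set.univ)

set_option maxHeartbeats 2000000 in
theorem master (α : ℝ) (q : ℕ → ℕ) (p : ℕ → ℤ) (A : ℕ → ℕ) (β : ℕ → ℝ)
    (hβ : ∀ n, (q n : ℝ) * α - p n = (-1) ^ n * β n)
    (hβpos : ∀ n, 0 < β n) (hβlt : ∀ n, β n < 1)
    (hq1 : ∀ n, 1 ≤ q n) (hq0 : q 0 = 1)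
    (hdet : ∀ n, (q (n + 1) : ℝ) * β n + (q n : ℝ) * β (n + 1) = 1)
    (hqrec : ∀ n, q (n + 2) = A n * q (n + 1) + q n)
    (hβrec : ∀ n, β n = A n * β (n + 1) + β (n + 2)) :
    ∀ n, Part α q n := by
  have hfract : ∀ n, Int.fract ((q n : ℝ) * α) = if Even n then β n else 1 - β n := by
    intro n
    have h1 : (q n : ℝ) * α = (p n : ℝ) + (-1) ^ n * β n := by linarith [hβ n]
    have hb01 : Int.fract (β n) = β n := Int.fract_eq_self.2 ⟨(hβpos n).le, hβlt n⟩
    rcases Nat.even_or_odd n with hn | hn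
    · rw [if_pos hn, h1, hn.neg_one_pow, one_mul, add_comm, Int.fract_add_intCast, hb01]
    · rw [if_neg (Nat.not_even_iff_odd.2 hn), h1, hn.neg_one_pow, neg_one_mul, add_comm,
        Int.fract_add_intCast, Int.fract_neg, hb01]
      rw [hb01]; exact (hβpos n).ne'
  have hphifun : (fun x : ℝ => (x : UnitAddCircle)) = ⇑phi := rfl
  have hbase : ∀ n, sinaiBase α q n
      = phi '' (if Even n then Ico (0 : ℝ) (β n) else Ico (1 - β n) 1) := by
    intro n
    rcases Nat.even_or_odd n with hn | hn
    · have h2 : Int.fract ((q n : ℝ) * α) = β n := by rw [hfract n, if_pos hn]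
      rw [sinaiBase, if_pos hn, if_pos hn, h2, hphifun]
    · have hne := Nat.not_even_iff_odd.2 hn
      have h2 : Int.fract ((q n : ℝ) * α) = 1 - β n := by rw [hfract n, if_neg hne]
      rw [sinaiBase, if_neg hne, if_neg hne, h2, hphifun]
  have hrepD : ∀ (m j : ℕ) (c : ℝ), (∃ k : ℤ, (j : ℝ) * α - c = (k : ℝ)) →
      sinaiInterval α q m j
        = phi '' (if Even m then Ico c (c + β m) else Ico (c - β m) c) := by
    intro m j c hex
    obtain ⟨k, hk⟩ := hex
    unfold sinaiInterval
    rw [hbase]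
    have h1 : (j : ℕ) • ((α : ℝ) : UnitAddCircle) = phi ((j : ℝ) * α) := by
      rw [← phi_eq, ← map_nsmul, nsmul_eq_mul]
    have h2 : phi ((j : ℝ) * α) = phi c := by
      rw [show (j : ℝ) * α = c + (k : ℝ) by linarith, phi_add_int]
    rw [h1, h2, Set.image_image]
    have himg : ∀ s : Set ℝ, (fun x => phi x + phi c) '' s = phi '' ((fun x => x + c) '' s) := by
      intro s
      rw [Set.image_image]
      exact Set.image_congr fun x _ => (map_add phi x c).symm
    rcases Nat.even_or_odd m with hm | hm
    · rw [if_pos hm, if_pos hm, himg, Set.image_add_const_Ico, zero_add, add_comm (β m) c]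
    · rw [if_neg (Nat.not_even_iff_odd.2 hm), if_neg (Nat.not_even_iff_odd.2 hm), himg,
        Set.image_add_const_Ico]
      have : Ico (1 - β m + c) (1 + c) = (fun x => x + ((1 : ℤ) : ℝ)) '' Ico (c - β m) c := by
        rw [Set.image_add_const_Ico]; push_cast; ring_nf
      rw [this, phi_image_shift]
  have hDtrans : ∀ m j k, sinaiInterval α q m (j + k)
      = (fun y => y + (j : ℕ) • ((α : ℝ) : UnitAddCircle)) '' sinaiInterval α q m k := by
    intro m j k
    unfold sinaiInterval
    rw [Set.image_image]
    refine Set.image_congr fun x _ => ?_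
    rw [add_nsmul]
    abel
  -- the main induction
  intro n
  induction n with
  | zero =>
      have hq0R : (q 0 : ℝ) = 1 := by rw [hq0]; norm_num
      have hq1R : (1 : ℝ) ≤ (q 1 : ℝ) := by exact_mod_cast hq1 1
      have hαp : α - (p 0 : ℝ) = β 0 := by
        have := hβ 0; rw [hq0R] at this; simpa using this
      have hrep0 : ∀ j : ℕ, sinaiInterval α q 0 j
          = phi '' Ico ((j : ℝ) * β 0) ((j : ℝ) * β 0 + β 0) := by
        intro j
        have h := hrepD 0 j ((j : ℝ) * β 0) ⟨(j : ℤ) * p 0, by push_cast; linear_combination (j : ℝ) * hαp⟩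
        rw [h, if_pos (Even.zero)]
      have hq1b : (q 1 : ℝ) * β 0 = 1 - β 1 := by
        have := hdet 0; rw [hq0R] at this; linarith
      have hcb : ∀ j : ℕ, j < q 1 → (j : ℝ) * β 0 + β 0 ≤ 1 - β 1 := by
        intro j hj
        have h1 : (j : ℝ) + 1 ≤ (q 1 : ℝ) := by exact_mod_cast Nat.succ_le_of_lt hj
        nlinarith [hβpos 0]
      have hsub : ∀ j : ℕ, j < q 1 → Ico ((j : ℝ) * β 0) ((j : ℝ) * β 0 + β 0) ⊆ Ico 0 1 := by
        intro j hj x hx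
        refine ⟨le_trans (mul_nonneg (Nat.cast_nonneg j) (hβpos 0).le) hx.1, lt_of_lt_of_le hx.2 ?_⟩
        have := hcb j hj
        nlinarith [hβpos 1]
      have hrep1 : sinaiInterval α q 1 0 = phi '' Ico (1 - β 1) 1 := by
        have h := hrepD 1 0 1 ⟨-1, by push_cast; ring⟩
        rw [h, if_neg (by simp)]
      have hsub1 : Ico (1 - β 1) 1 ⊆ Ico (0 : ℝ) 1 := by
        intro x hx
        refine ⟨le_trans ?_ hx.1, hx.2⟩
        nlinarith [hβpos 0, hq1b, hq1R]
      have hd0 : ∀ j j' : ℕ, j < j' → j' < q 1 →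
          Disjoint (sinaiInterval α q 0 j) (sinaiInterval α q 0 j') := by
        intro j j' hjj hj'
        rw [hrep0 j, hrep0 j']
        apply disjoint_phi_image (hsub j (lt_trans hjj hj')) (hsub j' hj')
        rw [Set.Ico_disjoint_Ico]
        have h1 : (j : ℝ) + 1 ≤ (j' : ℝ) := by exact_mod_cast Nat.succ_le_of_lt hjj
        refine le_trans (min_le_left _ _) (le_trans ?_ (le_max_right _ _))
        nlinarith [hβpos 0]
      refine ⟨?_, ?_, ?_, ?_⟩
      · intro j hj j' hj' hne
        rcases hne.lt_or_gt with h | h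
        · exact hd0 j j' h hj'
        · exact (hd0 j' j h hj).symm
      · intro j hj j' hj' hne
        rw [hq0] at hj hj'
        omega
      · intro j hj j' hj'
        rw [hq0] at hj'
        have : j' = 0 := by omega
        subst this
        rw [hrep0 j, hrep1]
        apply disjoint_phi_image (hsub j hj) hsub1
        rw [Set.Ico_disjoint_Ico]
        refine le_trans (min_le_left _ _) (le_trans (hcb j hj) (le_max_right _ _))
      · have e1 : (⋃ j ∈ Finset.range (q 1), sinaiInterval α q 0 j)
            = phi '' Ico 0 ((q 1 : ℝ) * β 0) := by
          rw [Set.iUnion₂_congr (fun j _ => hrep0 j), ← Set.image_iUnion₂]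
          have h := unionIco 0 (β 0) (hβpos 0).le (q 1)
          simp only [zero_add] at h
          rw [h]
        have e2 : (⋃ j ∈ Finset.range (q 0), sinaiInterval α q 1 j)
            = phi '' Ico (1 - β 1) 1 := by
          rw [hq0]
          simp [hrep1]
        rw [e1, e2, ← Set.image_union, hq1b,
          Ico_union_Ico_eq_Ico (by nlinarith [hβpos 0, hq1b, hq1R])
            (by nlinarith [hβpos 1]), phi_image_Ico01]
  | succ n ih =>
      obtain ⟨ih1, ih2, ih3, ih4⟩ := ih
      have hdpos := hβpos (n + 1)
      have hb2pos := hβpos (n + 2)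
      have hbpos := hβpos n
      have hblt := hβlt n
      have hb2lt := hβlt (n + 2)
      have hrecn := hβrec n
      have hAd : (0 : ℝ) ≤ (A n : ℝ) * β (n + 1) :=
        mul_nonneg (Nat.cast_nonneg _) hdpos.le
      have hb2eq : β n - (A n : ℝ) * β (n + 1) = β (n + 2) := by linarith
      -- even-case piece representation
      have hpieceE : Even n → ∀ i : ℕ, sinaiInterval α q (n + 1) (q n + i * q (n + 1))
          = phi '' Ico (β n - (i : ℝ) * β (n + 1) - β (n + 1)) (β n - (i : ℝ) * β (n + 1)) := by
        intro hn i
        have h1 := hβ n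
        have h2 := hβ (n + 1)
        rw [hn.neg_one_pow, one_mul] at h1
        rw [(hn.add_one).neg_one_pow, neg_one_mul] at h2
        have hkey : ((q n + i * q (n + 1) : ℕ) : ℝ) * α - (β n - (i : ℝ) * β (n + 1))
            = ((p n + i * p (n + 1) : ℤ) : ℝ) := by
          push_cast
          linear_combination h1 + (i : ℝ) * h2
        have h := hrepD (n + 1) (q n + i * q (n + 1)) (β n - (i : ℝ) * β (n + 1)) ⟨_, hkey⟩
        rw [h, if_neg (by simpa using hn.add_one)]
      have hpieceO : Odd n → ∀ i : ℕ, sinaiInterval α q (n + 1) (q n + i * q (n + 1))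
          = phi '' Ico (1 - β n + (i : ℝ) * β (n + 1)) (1 - β n + (i : ℝ) * β (n + 1) + β (n + 1)) := by
        intro hn i
        have h1 := hβ n
        have h2 := hβ (n + 1)
        rw [hn.neg_one_pow, neg_one_mul] at h1
        rw [(hn.add_one).neg_one_pow, one_mul] at h2
        have hkey : ((q n + i * q (n + 1) : ℕ) : ℝ) * α - (1 - β n + (i : ℝ) * β (n + 1))
            = ((p n + i * p (n + 1) - 1 : ℤ) : ℝ) := by
          push_cast
          linear_combination h1 + (i : ℝ) * h2
        have h := hrepD (n + 1) (q n + i * q (n + 1)) (1 - β n + (i : ℝ) * β (n + 1)) ⟨_, hkey⟩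
        rw [h, if_pos hn.add_one]
      -- base representations
      have hrepn0E : Even n → sinaiInterval α q n 0 = phi '' Ico 0 (β n) := by
        intro hn
        have h := hrepD n 0 0 ⟨0, by push_cast; ring⟩
        rw [h, if_pos hn, zero_add]
      have hrepn0O : Odd n → sinaiInterval α q n 0 = phi '' Ico (1 - β n) 1 := by
        intro hn
        have h := hrepD n 0 1 ⟨-1, by push_cast; ring⟩
        rw [h, if_neg (Nat.not_even_iff_odd.2 hn)]
      have hrepn2E : Even n → sinaiInterval α q (n + 2) 0 = phi '' Ico 0 (β (n + 2)) := by
        intro hn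
        have h := hrepD (n + 2) 0 0 ⟨0, by push_cast; ring⟩
        rw [h, if_pos (hn.add even_two), zero_add]
      have hrepn2O : Odd n → sinaiInterval α q (n + 2) 0 = phi '' Ico (1 - β (n + 2)) 1 := by
        intro hn
        have h := hrepD (n + 2) 0 1 ⟨-1, by push_cast; ring⟩
        rw [h, if_neg (Nat.not_even_iff_odd.2 (hn.add_even even_two))]
      -- subsets of [0,1)
      have hcastA : ∀ i : ℕ, i < A n → ((i : ℝ) + 1) * β (n + 1) ≤ (A n : ℝ) * β (n + 1) := by
        intro i hi
        have : ((i : ℝ) + 1) ≤ (A n : ℝ) := by exact_mod_cast Nat.succ_le_of_lt hi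
        exact mul_le_mul_of_nonneg_right this hdpos.le
      have hid_nonneg : ∀ i : ℕ, (0 : ℝ) ≤ (i : ℝ) * β (n + 1) :=
        fun i => mul_nonneg (Nat.cast_nonneg _) hdpos.le
      have hsubPE : ∀ i : ℕ, i < A n →
          Ico (β n - (i : ℝ) * β (n + 1) - β (n + 1)) (β n - (i : ℝ) * β (n + 1)) ⊆ Ico (0 : ℝ) 1 := by
        intro i hi x hx
        have h2 := hcastA i hi
        have h3 := hid_nonneg i
        exact ⟨by nlinarith [hx.1], by nlinarith [hx.2]⟩
      have hsubPO : ∀ i : ℕ, i < A n →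
          Ico (1 - β n + (i : ℝ) * β (n + 1)) (1 - β n + (i : ℝ) * β (n + 1) + β (n + 1)) ⊆ Ico (0 : ℝ) 1 := by
        intro i hi x hx
        have h2 := hcastA i hi
        have h3 := hid_nonneg i
        exact ⟨by nlinarith [hx.1], by nlinarith [hx.2]⟩
      have hsub2E : Ico (0 : ℝ) (β (n + 2)) ⊆ Ico (0 : ℝ) 1 :=
        fun x hx => ⟨hx.1, lt_trans hx.2 hb2lt⟩
      have hsub2O : Ico (1 - β (n + 2)) 1 ⊆ Ico (0 : ℝ) 1 :=
        fun x hx => ⟨by nlinarith [hx.1], hx.2⟩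
      -- base split
      have hsplit0 : sinaiInterval α q n 0
          = sinaiInterval α q (n + 2) 0
            ∪ ⋃ i ∈ Finset.range (A n), sinaiInterval α q (n + 1) (q n + i * q (n + 1)) := by
        rcases Nat.even_or_odd n with hn | hn
        · rw [hrepn0E hn, hrepn2E hn, Set.iUnion₂_congr (fun i _ => hpieceE hn i),
            ← Set.image_iUnion₂, ← Set.image_union]
          have hu := unionIcoDesc (β n) (β (n + 1)) hdpos.le (A n)
          rw [hu, hb2eq, Ico_union_Ico_eq_Ico hb2pos.le (by linarith)]
        · rw [hrepn0O hn, hrepn2O hn, Set.iUnion₂_congr (fun i _ => hpieceO hn i),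
            ← Set.image_iUnion₂, ← Set.image_union]
          have hu := unionIco (1 - β n) (β (n + 1)) hdpos.le (A n)
          rw [show ⋃ i ∈ Finset.range (A n),
                Ico (1 - β n + (i : ℝ) * β (n + 1)) (1 - β n + (i : ℝ) * β (n + 1) + β (n + 1))
              = Ico (1 - β n) (1 - β n + (A n : ℝ) * β (n + 1)) from hu,
            show (1 : ℝ) - β n + (A n : ℝ) * β (n + 1) = 1 - β (n + 2) by linarith,
            Set.union_comm, Ico_union_Ico_eq_Ico (by linarith) (by linarith)]
      -- base disjointness
      have hdis0a : ∀ i : ℕ, i < A n →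
          Disjoint (sinaiInterval α q (n + 2) 0)
            (sinaiInterval α q (n + 1) (q n + i * q (n + 1))) := by
        intro i hi
        rcases Nat.even_or_odd n with hn | hn
        · rw [hrepn2E hn, hpieceE hn i]
          apply disjoint_phi_image hsub2E (hsubPE i hi)
          rw [Set.Ico_disjoint_Ico]
          refine le_trans (min_le_left _ _) (le_trans ?_ (le_max_right _ _))
          have := hcastA i hi
          linarith
        · rw [hrepn2O hn, hpieceO hn i]
          apply disjoint_phi_image hsub2O (hsubPO i hi)
          rw [Set.Ico_disjoint_Ico]
          refine le_trans (min_le_right _ _) (le_trans ?_ (le_max_left _ _))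
          have := hcastA i hi
          linarith
      have hdis0b' : ∀ i i' : ℕ, i < i' → i' < A n →
          Disjoint (sinaiInterval α q (n + 1) (q n + i * q (n + 1)))
            (sinaiInterval α q (n + 1) (q n + i' * q (n + 1))) := by
        intro i i' hii hi'
        have hi : i < A n := lt_trans hii hi'
        have hcast : (i : ℝ) + 1 ≤ (i' : ℝ) := by exact_mod_cast Nat.succ_le_of_lt hii
        rcases Nat.even_or_odd n with hn | hn
        · rw [hpieceE hn i, hpieceE hn i']
          apply disjoint_phi_image (hsubPE i hi) (hsubPE i' hi')
          rw [Set.Ico_disjoint_Ico]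
          refine le_trans (min_le_right _ _) (le_trans ?_ (le_max_left _ _))
          nlinarith
        · rw [hpieceO hn i, hpieceO hn i']
          apply disjoint_phi_image (hsubPO i hi) (hsubPO i' hi')
          rw [Set.Ico_disjoint_Ico]
          refine le_trans (min_le_left _ _) (le_trans ?_ (le_max_right _ _))
          nlinarith
      have hdis0b : ∀ i : ℕ, i < A n → ∀ i' : ℕ, i' < A n → i ≠ i' →
          Disjoint (sinaiInterval α q (n + 1) (q n + i * q (n + 1)))
            (sinaiInterval α q (n + 1) (q n + i' * q (n + 1))) := by
        intro i hi i' hi' hne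
        rcases hne.lt_or_gt with h | h
        · exact hdis0b' i i' h hi'
        · exact (hdis0b' i' i h hi).symm
      -- translated versions
      have hDj : ∀ (m j : ℕ), sinaiInterval α q m j
          = (fun y => y + (j : ℕ) • ((α : ℝ) : UnitAddCircle)) '' sinaiInterval α q m 0 := by
        intro m j
        simpa using hDtrans m j 0
      have hsplit : ∀ j : ℕ, sinaiInterval α q n j
          = sinaiInterval α q (n + 2) j
            ∪ ⋃ i ∈ Finset.range (A n), sinaiInterval α q (n + 1) (j + (q n + i * q (n + 1))) := by
        intro j
        rw [hDj n j, hsplit0, Set.image_union, Set.image_iUnion₂, ← hDj (n + 2) j,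
          Set.iUnion₂_congr (fun i _ => (hDtrans (n + 1) j (q n + i * q (n + 1))).symm)]
      have hdis_a : ∀ j : ℕ, ∀ i : ℕ, i < A n →
          Disjoint (sinaiInterval α q (n + 2) j)
            (sinaiInterval α q (n + 1) (j + (q n + i * q (n + 1)))) := by
        intro j i hi
        rw [hDj (n + 2) j, hDtrans (n + 1) j _]
        exact Set.disjoint_image_of_injective (add_left_injective _) (hdis0a i hi)
      have hdis_b : ∀ j : ℕ, ∀ i : ℕ, i < A n → ∀ i' : ℕ, i' < A n → i ≠ i' →
          Disjoint (sinaiInterval α q (n + 1) (j + (q n + i * q (n + 1))))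
            (sinaiInterval α q (n + 1) (j + (q n + i' * q (n + 1)))) := by
        intro j i hi i' hi' hne
        rw [hDtrans (n + 1) j _, hDtrans (n + 1) j _]
        exact Set.disjoint_image_of_injective (add_left_injective _) (hdis0b i hi i' hi' hne)
      -- subset facts
      have hsub2 : ∀ j : ℕ, sinaiInterval α q (n + 2) j ⊆ sinaiInterval α q n j := by
        intro j
        rw [hsplit j]
        exact Set.subset_union_left
      have hsubp : ∀ (j i : ℕ), i < A n →
          sinaiInterval α q (n + 1) (j + (q n + i * q (n + 1))) ⊆ sinaiInterval α q n j := by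
        intro j i hi x hx
        rw [hsplit j]
        exact Set.mem_union_right _ (Set.mem_iUnion₂.2 ⟨i, Finset.mem_range.2 hi, hx⟩)
      -- index decomposition
      have hidx : ∀ j : ℕ, j < q (n + 2) → j < q n ∨
          ∃ r, r < q (n + 1) ∧ ∃ i, i < A n ∧ j = r + (q n + i * q (n + 1)) := by
        intro j hj
        by_cases h : j < q n
        · exact Or.inl h
        · right
          have hQ1 : 0 < q (n + 1) := hq1 (n + 1)
          have hlt : j - q n < A n * q (n + 1) := by
            rw [hqrec n] at hj
            omega
          have hlt' : j - q n < q (n + 1) * A n := by rw [Nat.mul_comm]; exact hlt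
          refine ⟨(j - q n) % q (n + 1), Nat.mod_lt _ hQ1, (j - q n) / q (n + 1),
            Nat.div_lt_of_lt_mul hlt', ?_⟩
          have h2 := Nat.div_add_mod' (j - q n) (q (n + 1))
          omega
      have hbound : ∀ r : ℕ, r < q (n + 1) → ∀ i : ℕ, i < A n →
          r + (q n + i * q (n + 1)) < q (n + 2) := by
        intro r hr i hi
        rw [hqrec n]
        have h1 : (i + 1) * q (n + 1) ≤ A n * q (n + 1) :=
          Nat.mul_le_mul_right _ (Nat.succ_le_of_lt hi)
        have h2 : (i + 1) * q (n + 1) = i * q (n + 1) + q (n + 1) := Nat.succ_mul _ _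
        omega
      refine ⟨?_, ?_, ?_, ?_⟩
      · -- level n+1 pairwise disjoint, indices < q (n+2)
        intro j hj j' hj' hne
        rcases hidx j hj with hj0 | ⟨r, hr, i, hi, rfl⟩ <;>
          rcases hidx j' hj' with hj0' | ⟨r', hr', i', hi', rfl⟩
        · exact ih2 j hj0 j' hj0' hne
        · exact ((ih3 r' hr' j hj0).symm.mono_right (hsubp r' i' hi'))
        · exact (ih3 r hr j' hj0').mono_left (hsubp r i hi)
        · by_cases hrr : r = r'
          · subst hrr
            have hii : i ≠ i' := by
              intro hii
              exact hne (by rw [hii])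
            exact hdis_b r i hi i' hi' hii
          · exact ((ih1 r hr r' hr' hrr).mono (hsubp r i hi) (hsubp r' i' hi'))
      · -- level n+2 pairwise disjoint, indices < q (n+1)
        intro j hj j' hj' hne
        exact (ih1 j hj j' hj' hne).mono (hsub2 j) (hsub2 j')
      · -- mixed
        intro j hj j' hj'
        rcases hidx j hj with hj0 | ⟨r, hr, i, hi, rfl⟩
        · exact ((ih3 j' hj' j hj0).mono_left (hsub2 j')).symm
        · by_cases hrr : r = j'
          · subst hrr
            exact (hdis_a r i hi).symm
          · exact (ih1 r hr j' hj' hrr).mono (hsubp r i hi) (hsub2 j')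
      · -- union
        apply Set.eq_univ_of_univ_subset
        rw [← ih4]
        apply Set.union_subset
        · intro x hx
          obtain ⟨j, hj, hx⟩ := Set.mem_iUnion₂.1 hx
          rw [hsplit j] at hx
          rcases hx with hx | hx
          · exact Set.mem_union_right _ (Set.mem_iUnion₂.2 ⟨j, hj, hx⟩)
          · obtain ⟨i, hi, hx⟩ := Set.mem_iUnion₂.1 hx
            refine Set.mem_union_left _ (Set.mem_iUnion₂.2 ⟨_, ?_, hx⟩)
            exact Finset.mem_range.2
              (hbound j (Finset.mem_range.1 hj) i (Finset.mem_range.1 hi))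
        · intro x hx
          obtain ⟨j, hj, hx⟩ := Set.mem_iUnion₂.1 hx
          refine Set.mem_union_left _ (Set.mem_iUnion₂.2 ⟨j, ?_, hx⟩)
          refine Finset.mem_range.2 (lt_of_lt_of_le (Finset.mem_range.1 hj) ?_)
          rw [hqrec n]
          omega

end SinaiAux

set_option maxHeartbeats 1000000 in
theorem stmt11 (α : ℝ) (hα : Irrational α) (q : ℕ → ℕ)
    (hq : ∀ n, (q n : ℝ) = (GenContFract.of α).dens n)
    (n : ℕ) (hn : 1 ≤ n) :
    (∀ j < q (n + 1), ∀ j' < q (n + 1), j ≠ j' →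
        Disjoint (sinaiInterval α q n j) (sinaiInterval α q n j')) ∧
    (∀ j < q n, ∀ j' < q n, j ≠ j' →
        Disjoint (sinaiInterval α q (n + 1) j) (sinaiInterval α q (n + 1) j')) ∧
    (∀ j < q (n + 1), ∀ j' < q n,
        Disjoint (sinaiInterval α q n j) (sinaiInterval α q (n + 1) j')) ∧
    ((⋃ j ∈ Finset.range (q (n + 1)), sinaiInterval α q n j) ∪
        (⋃ j ∈ Finset.range (q n), sinaiInterval α q (n + 1) j) = Set.univ) := by
  classical
  have hirr' : ¬ ∃ r : ℚ, α = (r : ℝ) := by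
    rintro ⟨r, rfl⟩
    exact hα ⟨r, rfl⟩
  have hterm : ∀ m, ¬ (GenContFract.of α).TerminatedAt m := by
    intro m hm
    exact hirr' ((GenContFract.terminates_iff_rat α).1 ⟨m, hm⟩)
  have hstream : ∀ m, GenContFract.IntFractPair.stream α m ≠ none := by
    intro m
    cases m with
    | zero => rw [GenContFract.IntFractPair.stream_zero]; simp
    | succ m =>
        intro h
        exact hterm m
          (GenContFract.of_terminatedAt_n_iff_succ_nth_intFractPair_stream_eq_none.2 h)
  have hs : ∀ m, ∃ b : ℤ, (GenContFract.of α).s.get? m = some ⟨1, (b : ℝ)⟩ ∧ 1 ≤ b := by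
    intro m
    obtain ⟨gp, hgp⟩ := Option.ne_none_iff_exists'.1
      (fun h => hterm m (GenContFract.terminatedAt_iff_s_none.2 h))
    have ha : gp.a = 1 := GenContFract.of_partNum_eq_one (GenContFract.partNum_eq_s_a hgp)
    obtain ⟨b, hb⟩ := GenContFract.exists_int_eq_of_partDen (GenContFract.partDen_eq_s_b hgp)
    have h1b : (1 : ℝ) ≤ gp.b :=
      GenContFract.of_one_le_get?_partDen (GenContFract.partDen_eq_s_b hgp)
    refine ⟨b, ?_, ?_⟩
    · rw [hgp]
      cases gp with
      | mk a' b' => simp only at ha hb ⊢; rw [ha, hb]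
    · rw [hb] at h1b
      exact_mod_cast h1b
  choose bz hbz hbz1 using hs
  have hbzR1 : ∀ m, (1 : ℝ) ≤ (bz m : ℝ) := by
    intro m; exact_mod_cast hbz1 m
  have hdens1 : ∀ m, (1 : ℝ) ≤ (GenContFract.of α).dens m := by
    intro m
    induction m with
    | zero => rw [GenContFract.zeroth_den_eq_one]
    | succ m ihm => exact le_trans ihm GenContFract.of_den_mono
  have hq1 : ∀ m, 1 ≤ q m := by
    intro m
    have h := hdens1 m
    rw [← hq m] at h
    exact_mod_cast h
  have hq0 : q 0 = 1 := by
    have h := hq 0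
    rw [GenContFract.zeroth_den_eq_one] at h
    exact_mod_cast h
  -- numerators are integers
  have hnum : ∀ m, ∃ z : ℤ, (z : ℝ) = (GenContFract.of α).nums m := by
    intro m
    induction m using Nat.strong_induction_on with
    | _ m ihm =>
      match m with
      | 0 => exact ⟨⌊α⌋, by rw [GenContFract.zeroth_num_eq_h, GenContFract.of_h_eq_floor]⟩
      | 1 =>
          refine ⟨bz 0 * ⌊α⌋ + 1, ?_⟩
          rw [GenContFract.first_num_eq (hbz 0), GenContFract.of_h_eq_floor]
          push_cast
          ring
      | (m + 2) =>
          obtain ⟨z1, hz1⟩ := ihm (m + 1) (by omega)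
          obtain ⟨z0, hz0⟩ := ihm m (by omega)
          refine ⟨bz (m + 1) * z1 + z0, ?_⟩
          rw [GenContFract.nums_recurrence (hbz (m + 1)) hz0.symm hz1.symm]
          push_cast
          ring
  choose pz hpz using hnum
  set A : ℕ → ℕ := fun m => (bz (m + 1)).toNat with hA
  have hAR : ∀ m, ((A m : ℕ) : ℝ) = (bz (m + 1) : ℝ) := by
    intro m
    rw [hA]
    simp only
    exact_mod_cast congrArg (fun z : ℤ => (z : ℝ))
      (Int.toNat_of_nonneg (le_trans zero_le_one (hbz1 (m + 1))))
  set β : ℕ → ℝ := fun m => (-1) ^ m * ((q m : ℝ) * α - pz m) with hβd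
  have hsq : ∀ m : ℕ, ((-1 : ℝ)) ^ m * (-1) ^ m = 1 := by
    intro m
    rw [← pow_add]
    exact Even.neg_one_pow ⟨m, rfl⟩
  have hβ : ∀ m, (q m : ℝ) * α - pz m = (-1) ^ m * β m := by
    intro m
    rw [hβd]
    simp only
    rw [← mul_assoc, hsq, one_mul]
  -- positivity and upper bound via sub_convs_eq
  have hβval : ∀ m, ∃ ifp : GenContFract.IntFractPair ℝ,
      GenContFract.IntFractPair.stream α m = some ifp ∧ 0 < ifp.fr ∧ ifp.fr < 1 ∧
      β m = 1 / (ifp.fr⁻¹ * (GenContFract.of α).dens m + ((GenContFract.of α).contsAux m).b) := by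
    intro m
    obtain ⟨ifp, hifp⟩ := Option.ne_none_iff_exists'.1 (hstream m)
    have hfr0 : 0 ≤ ifp.fr := GenContFract.IntFractPair.nth_stream_fr_nonneg hifp
    have hfr1 : ifp.fr < 1 := GenContFract.IntFractPair.nth_stream_fr_lt_one hifp
    have hfrne : ifp.fr ≠ 0 := by
      intro h
      exact hstream (m + 1) (GenContFract.IntFractPair.stream_eq_none_of_fr_eq_zero hifp h)
    have hfrpos : 0 < ifp.fr := lt_of_le_of_ne hfr0 (Ne.symm hfrne)
    have hsub := GenContFract.sub_convs_eq hifp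
    simp only [if_neg hfrne] at hsub
    have hB : (GenContFract.of α).dens m = ((GenContFract.of α).contsAux (m + 1)).b := by
      rw [GenContFract.den_eq_conts_b, GenContFract.nth_cont_eq_succ_nth_contAux]
    have hpB0 : (0 : ℝ) ≤ ((GenContFract.of α).contsAux m).b :=
      GenContFract.zero_le_of_contsAux_b
    have hdm := hdens1 m
    have hinv : 1 < ifp.fr⁻¹ := (one_lt_inv₀ hfrpos).2 hfr1
    have hden : 1 < ifp.fr⁻¹ * (GenContFract.of α).dens m + ((GenContFract.of α).contsAux m).b := by
      nlinarith
    have hθ : (q m : ℝ) * α - pz m = (GenContFract.of α).dens m * (α - (GenContFract.of α).convs m) := by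
      rw [GenContFract.conv_eq_num_div_den, mul_sub,
        mul_div_cancel₀ _ (by linarith : (GenContFract.of α).dens m ≠ 0), hq m, hpz m]
    refine ⟨ifp, hifp, hfrpos, hfr1, ?_⟩
    rw [hβd]
    simp only
    rw [hθ, hsub, ← hB]
    have hdenne : ifp.fr⁻¹ * (GenContFract.of α).dens m + ((GenContFract.of α).contsAux m).b ≠ 0 := by
      linarith
    have hdne : (GenContFract.of α).dens m ≠ 0 := by linarith
    rcases Nat.even_or_odd m with hm | hm
    · rw [hm.neg_one_pow]
      field_simp
    · rw [hm.neg_one_pow]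
      field_simp
  have hβpos : ∀ m, 0 < β m := by
    intro m
    obtain ⟨ifp, _, hfrpos, hfr1, hval⟩ := hβval m
    have hinv : 1 < ifp.fr⁻¹ := (one_lt_inv₀ hfrpos).2 hfr1
    have hpB0 : (0 : ℝ) ≤ ((GenContFract.of α).contsAux m).b :=
      GenContFract.zero_le_of_contsAux_b
    have hdm := hdens1 m
    rw [hval]
    have : (0:ℝ) < ifp.fr⁻¹ * (GenContFract.of α).dens m + ((GenContFract.of α).contsAux m).b := by
      nlinarith
    positivity
  have hβlt : ∀ m, β m < 1 := by
    intro m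
    obtain ⟨ifp, _, hfrpos, hfr1, hval⟩ := hβval m
    have hinv : 1 < ifp.fr⁻¹ := (one_lt_inv₀ hfrpos).2 hfr1
    have hpB0 : (0 : ℝ) ≤ ((GenContFract.of α).contsAux m).b :=
      GenContFract.zero_le_of_contsAux_b
    have hdm := hdens1 m
    rw [hval]
    rw [div_lt_one (by nlinarith)]
    nlinarith
  -- determinant identity
  have hdet : ∀ m, (q (m + 1) : ℝ) * β m + (q m : ℝ) * β (m + 1) = 1 := by
    intro m
    have hdetm := SimpContFract.determinant
      (s := SimpContFract.of α) (n := m) (hterm m)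
    have hdetm' : (GenContFract.of α).nums m * (GenContFract.of α).dens (m + 1)
        - (GenContFract.of α).dens m * (GenContFract.of α).nums (m + 1) = (-1) ^ (m + 1) := by
      rw [GenContFract.num_eq_conts_a, GenContFract.den_eq_conts_b,
        GenContFract.num_eq_conts_a, GenContFract.den_eq_conts_b,
        GenContFract.nth_cont_eq_succ_nth_contAux, GenContFract.nth_cont_eq_succ_nth_contAux]
      exact hdetm
    rw [← hq m, ← hq (m + 1), ← hpz m, ← hpz (m + 1)] at hdetm'
    have h1 := hβ m
    have h2 := hβ (m + 1)
    have hpow : ((-1 : ℝ)) ^ (m + 1) = -(-1) ^ m := by rw [pow_succ]; ring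
    rw [hpow] at hdetm' h2
    rcases Nat.even_or_odd m with hm | hm
    · rw [hm.neg_one_pow] at h1 h2 hdetm'
      linear_combination -(q (m + 1) : ℝ) * h1 + (q m : ℝ) * h2 - hdetm'
    · rw [hm.neg_one_pow] at h1 h2 hdetm'
      linear_combination (q (m + 1) : ℝ) * h1 - (q m : ℝ) * h2 + hdetm' 
  -- recurrences
  have hqrecR : ∀ m, ((GenContFract.of α).dens (m + 2))
      = (bz (m + 1) : ℝ) * (GenContFract.of α).dens (m + 1) + (GenContFract.of α).dens m := by
    intro m
    have h := GenContFract.dens_recurrence (hbz (m + 1)) rfl rfl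
    rw [h]
    simp
  have hqrec : ∀ m, q (m + 2) = A m * q (m + 1) + q m := by
    intro m
    have h : ((q (m + 2) : ℕ) : ℝ) = ((A m * q (m + 1) + q m : ℕ) : ℝ) := by
      push_cast
      rw [hq (m + 2), hqrecR m, hAR m, hq (m + 1), hq m]
    exact_mod_cast h
  have hprecR : ∀ m, ((pz (m + 2) : ℝ))
      = (bz (m + 1) : ℝ) * (pz (m + 1) : ℝ) + (pz m : ℝ) := by
    intro m
    have h := GenContFract.nums_recurrence (hbz (m + 1)) (hpz m).symm (hpz (m + 1)).symm
    rw [hpz (m + 2), h]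
    simp
  have hβrec : ∀ m, β m = (A m : ℝ) * β (m + 1) + β (m + 2) := by
    intro m
    have hqr : ((q (m + 2) : ℕ) : ℝ) = (A m : ℝ) * (q (m + 1) : ℝ) + (q m : ℝ) := by
      rw [hqrec m]; push_cast; ring
    have hpr : ((pz (m + 2) : ℝ)) = (A m : ℝ) * (pz (m + 1) : ℝ) + (pz m : ℝ) := by
      rw [hprecR m, hAR m]
    have h0 := hβ m
    have h1 := hβ (m + 1)
    have h2 := hβ (m + 2)
    have e0 : ((-1 : ℝ)) ^ (m + 1) = -(-1) ^ m := by rw [pow_succ]; ring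
    have e1 : ((-1 : ℝ)) ^ (m + 2) = (-1) ^ m := by rw [pow_add]; ring
    rw [e0] at h1
    rw [e1] at h2
    rcases Nat.even_or_odd m with hm | hm
    · rw [hm.neg_one_pow] at h0 h1 h2
      linear_combination -h0 - (A m : ℝ) * h1 + h2 - α * hqr + hpr
    · rw [hm.neg_one_pow] at h0 h1 h2
      linear_combination h0 + (A m : ℝ) * h1 - h2 + α * hqr - hpr
  exact SinaiAux.master α q pz A β hβ hβpos hβlt hq1 hq0 hdet hqrec hβrec n
end

section
/- For every a ∈ (0,1), the function f(x) = −2a·sin(2πx)/(1 − 2a·cos(2πx) + a²) on 𝕋 is a C² function with zero mean whose Fourier coefficients are f̂(0)=0, f̂(n) = i a^n for n > 0, and f̂(n) = −i a^{−n} for n < 0, and for every irrational α the one-sided ergodic Hilbert transform at 0 is bounded: sup_N |∑_{n=1}^N f(nα)/n| < +∞. -/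
open Real Finset

lemma abs_exp_sub_one (s : ℝ) :
    ‖Complex.exp (s * Complex.I) - 1‖ = 2 * |Real.sin (s/2)| := by
  have e1 : Complex.exp (((s:ℂ)/2)*Complex.I) - Complex.exp ((-((s:ℂ)/2))*Complex.I)
      = 2 * Real.sin (s/2) * Complex.I := by
    rw [Complex.exp_mul_I, Complex.exp_mul_I, Complex.cos_neg, Complex.sin_neg]
    push_cast
    ring
  have e2 : Complex.exp ((s:ℂ) * Complex.I) - 1
      = Complex.exp (((s:ℂ)/2)*Complex.I) * (2 * Real.sin (s/2) * Complex.I) := by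
    rw [← e1, mul_sub, ← Complex.exp_add, ← Complex.exp_add]
    rw [show (s:ℂ)/2*Complex.I + (s:ℂ)/2*Complex.I = (s:ℂ)*Complex.I by ring,
      show (s:ℂ)/2*Complex.I + (-((s:ℂ)/2))*Complex.I = 0 by ring, Complex.exp_zero]
  rw [e2, norm_mul]
  have : ((s:ℂ)/2) = ((s/2 : ℝ) : ℂ) := by push_cast; ring
  rw [this, Complex.norm_exp_ofReal_mul_I, one_mul, norm_mul, norm_mul]
  rw [Complex.norm_real, Complex.norm_I, Real.norm_eq_abs, mul_one]
  norm_num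

lemma dirichlet_bound (s : ℝ) (hs : Real.sin (s/2) ≠ 0) (M N : ℕ) :
    |∑ n ∈ Finset.Ioc M N, Real.sin (n * s)| ≤ 1 / |Real.sin (s/2)| := by
  have hpos : 0 < |Real.sin (s/2)| := abs_pos.mpr hs
  rcases le_or_gt N M with h | h
  · rw [Finset.Ioc_eq_empty (by omega)]
    simp only [Finset.sum_empty, abs_zero]
    positivity
  set z : ℂ := Complex.exp (s * Complex.I) with hz
  have habs : ∀ k : ℕ, ‖z ^ k‖ = 1 := by
    intro k
    rw [norm_pow, Complex.norm_exp_ofReal_mul_I, one_pow]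
  have hz1 : z ≠ 1 := by
    intro hc
    apply hs
    have : ‖z - 1‖ = 0 := by rw [hc]; simp
    rw [abs_exp_sub_one] at this
    simpa [abs_eq_zero] using this
  have him : ∀ n : ℕ, Real.sin (n * s) = (z ^ n).im := by
    intro n
    rw [← Complex.exp_nat_mul]
    rw [show (n:ℂ) * ((s:ℝ) * Complex.I) = ((n * s : ℝ):ℂ) * Complex.I by push_cast; ring]
    rw [Complex.exp_ofReal_mul_I_im]
  calc |∑ n ∈ Finset.Ioc M N, Real.sin (n * s)|
      = |(∑ n ∈ Finset.Ioc M N, z ^ n).im| := by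
        rw [Complex.im_sum]
        congr 1
        exact Finset.sum_congr rfl fun n _ => him n
    _ ≤ ‖∑ n ∈ Finset.Ioc M N, z ^ n‖ := Complex.abs_im_le_norm _
    _ ≤ 1 / |Real.sin (s/2)| := by
        have : (Finset.Ioc M N) = Finset.Ico (M+1) (N+1) := by
          ext x; simp [Nat.lt_succ_iff]
        rw [this, geom_sum_Ico hz1 (by omega)]
        rw [norm_div]
        have hd : ‖z - 1‖ = 2 * |Real.sin (s/2)| := abs_exp_sub_one s
        rw [hd]
        have : ‖z ^ (N+1) - z ^ (M+1)‖ ≤ 2 := by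
          calc ‖z ^ (N+1) - z ^ (M+1)‖
              ≤ ‖z ^ (N+1)‖ + ‖z ^ (M+1)‖ := by
                  exact norm_sub_le _ _
            _ = 2 := by rw [habs, habs]; norm_num
        rw [div_le_div_iff₀ (by positivity) (by positivity)]
        nlinarith

lemma dirichlet_range (s : ℝ) (hs : Real.sin (s/2) ≠ 0) (k : ℕ) :
    |∑ n ∈ Finset.range k, Real.sin (n * s)| ≤ 1 / |Real.sin (s/2)| := by
  rcases Nat.eq_zero_or_pos k with hk | hk
  · subst hk; simp
  have : ∑ n ∈ Finset.range k, Real.sin (n * s) = ∑ n ∈ Finset.Ioc 0 (k-1), Real.sin (n * s) := by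
    refine (Finset.sum_subset ?_ ?_).symm
    · intro x hx; simp at hx ⊢; omega
    · intro x hx hx'
      simp at hx hx'
      have : x = 0 := by omega
      subst this; simp
  rw [this]
  exact dirichlet_bound s hs 0 (k-1)

lemma telescope_Ioc (u : ℕ → ℝ) (M K : ℕ) (h : M ≤ K) :
    ∑ i ∈ Finset.Ioc M K, (u i - u (i+1)) = u (M+1) - u (K+1) := by
  induction K with
  | zero => interval_cases M; simp
  | succ K ih =>
    rcases Nat.eq_or_lt_of_le h with h' | h'
    · subst h'; simp
    · have hMK : M ≤ K := by omega
      rw [Finset.sum_Ioc_succ_top hMK, ih hMK]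
      ring

lemma abel_bound (s : ℝ) (hs : Real.sin (s/2) ≠ 0) (M N : ℕ) (hM : 0 < M) :
    |∑ n ∈ Finset.Ioc M N, Real.sin (n * s) / n| ≤
      2 * (1 / |Real.sin (s/2)|) / (M+1) := by
  set A := 1 / |Real.sin (s/2)| with hA
  have hA0 : 0 < A := by rw [hA]; positivity
  have hG : ∀ k : ℕ, |∑ i ∈ Finset.range k, Real.sin (i * s)| ≤ A := dirichlet_range s hs
  rcases le_or_gt N M with h | hMN
  · rw [Finset.Ioc_eq_empty (by omega)]
    simp only [Finset.sum_empty, abs_zero]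
    positivity
  have key := Finset.sum_Ioc_by_parts (fun n : ℕ => ((n:ℝ))⁻¹)
    (fun n : ℕ => Real.sin (n * s)) hMN
  simp only [smul_eq_mul] at key
  have hrw : ∑ n ∈ Finset.Ioc M N, Real.sin (n * s) / n
      = ∑ n ∈ Finset.Ioc M N, ((n:ℝ))⁻¹ * Real.sin (n * s) := by
    refine Finset.sum_congr rfl fun n _ => ?_
    rw [div_eq_inv_mul]
  rw [hrw, key]
  set G : ℕ → ℝ := fun k => ∑ i ∈ Finset.range k, Real.sin (i * s) with hGdef
  have step3 : |∑ i ∈ Finset.Ioc M (N-1), ((((i+1:ℕ)):ℝ)⁻¹ - ((i:ℝ))⁻¹) * G (i+1)|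
      ≤ ((M+1:ℝ)⁻¹ - (N:ℝ)⁻¹) * A := by
    calc |∑ i ∈ Finset.Ioc M (N-1), ((((i+1:ℕ)):ℝ)⁻¹ - ((i:ℝ))⁻¹) * G (i+1)|
        ≤ ∑ i ∈ Finset.Ioc M (N-1), |((((i+1:ℕ)):ℝ)⁻¹ - ((i:ℝ))⁻¹) * G (i+1)| :=
          Finset.abs_sum_le_sum_abs _ _
      _ ≤ ∑ i ∈ Finset.Ioc M (N-1), (((i:ℝ))⁻¹ - (((i+1:ℕ)):ℝ)⁻¹) * A := by
          refine Finset.sum_le_sum fun i hi => ?_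
          simp only [Finset.mem_Ioc] at hi
          have hi1 : (0:ℝ) < i := by exact_mod_cast by omega
          have hmono : ((((i+1:ℕ)):ℝ)⁻¹ : ℝ) ≤ ((i:ℝ))⁻¹ := by
            apply inv_anti₀ hi1
            push_cast; linarith
          rw [abs_mul, abs_of_nonpos (by linarith)]
          have := hG (i+1)
          calc (-((((i+1:ℕ)):ℝ)⁻¹ - ((i:ℝ))⁻¹)) * |G (i+1)|
              ≤ (-((((i+1:ℕ)):ℝ)⁻¹ - ((i:ℝ))⁻¹)) * A := by
                apply mul_le_mul_of_nonneg_left this (by linarith)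
            _ = (((i:ℝ))⁻¹ - (((i+1:ℕ)):ℝ)⁻¹) * A := by ring
      _ = ((M+1:ℝ)⁻¹ - (N:ℝ)⁻¹) * A := by
          rw [← Finset.sum_mul]
          congr 1
          have := telescope_Ioc (fun i => ((i:ℝ))⁻¹) M (N-1) (by omega)
          rw [show ∑ i ∈ Finset.Ioc M (N-1), (((i:ℝ))⁻¹ - (((i+1:ℕ)):ℝ)⁻¹)
            = ∑ i ∈ Finset.Ioc M (N-1), ((fun i : ℕ => ((i:ℝ))⁻¹) i - (fun i : ℕ => ((i:ℝ))⁻¹) (i+1)) by push_cast; ring_nf, this]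
          have : N - 1 + 1 = N := by omega
          rw [this]
          push_cast
          ring
  have hNpos : (0:ℝ) < N := by exact_mod_cast by omega
  have hM1pos : (0:ℝ) < (M:ℝ)+1 := by positivity
  have b1 : |(N:ℝ)⁻¹ * G (N+1)| ≤ (N:ℝ)⁻¹ * A := by
    rw [abs_mul, abs_of_nonneg (by positivity)]
    exact mul_le_mul_of_nonneg_left (hG _) (by positivity)
  have b2 : |(((M+1:ℕ)):ℝ)⁻¹ * G (M+1)| ≤ ((M:ℝ)+1)⁻¹ * A := by
    rw [abs_mul, abs_of_nonneg (by positivity)]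
    push_cast
    exact mul_le_mul_of_nonneg_left (hG _) (by positivity)
  calc |(N:ℝ)⁻¹ * G (N+1) - (((M+1:ℕ)):ℝ)⁻¹ * G (M+1)
        - ∑ i ∈ Finset.Ioc M (N-1), ((((i+1:ℕ)):ℝ)⁻¹ - ((i:ℝ))⁻¹) * G (i+1)|
      ≤ |(N:ℝ)⁻¹ * G (N+1)| + |(((M+1:ℕ)):ℝ)⁻¹ * G (M+1)|
        + |∑ i ∈ Finset.Ioc M (N-1), ((((i+1:ℕ)):ℝ)⁻¹ - ((i:ℝ))⁻¹) * G (i+1)| := by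
        apply (abs_sub _ _).trans
        apply add_le_add_left
        exact abs_sub _ _
    _ ≤ (N:ℝ)⁻¹ * A + ((M:ℝ)+1)⁻¹ * A + ((M+1:ℝ)⁻¹ - (N:ℝ)⁻¹) * A :=
        add_le_add (add_le_add b1 b2) step3
    _ = 2 * A / ((M:ℝ)+1) := by field_simp; ring

lemma small_part_bound (s : ℝ) (K : ℕ) :
    |∑ n ∈ Finset.Icc 1 K, Real.sin (n * s) / n| ≤ K * |s| := by
  calc |∑ n ∈ Finset.Icc 1 K, Real.sin (n * s) / n|
      ≤ ∑ n ∈ Finset.Icc 1 K, |Real.sin (n * s) / n| := Finset.abs_sum_le_sum_abs _ _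
    _ ≤ ∑ n ∈ Finset.Icc 1 K, |s| := by
        refine Finset.sum_le_sum fun n hn => ?_
        simp only [Finset.mem_Icc] at hn
        have hn1 : (1:ℝ) ≤ n := by exact_mod_cast hn.1
        rw [abs_div, abs_of_nonneg (by linarith : (0:ℝ) ≤ (n:ℝ))]
        rw [div_le_iff₀ (by linarith)]
        calc |Real.sin (n * s)| ≤ |(n:ℝ) * s| := Real.abs_sin_le_abs
          _ = (n:ℝ) * |s| := by rw [abs_mul, abs_of_nonneg (by linarith)]
          _ = |s| * n := by ring
    _ = K * |s| := by rw [Finset.sum_const, Nat.card_Icc]; simp [nsmul_eq_mul]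

lemma sin_sum_bound (t : ℝ) (N : ℕ) :
    |∑ n ∈ Finset.Icc 1 N, Real.sin (n * t) / n| ≤ 1 + 3 * π := by
  have hπ := Real.pi_pos
  -- reduce to s ∈ [-π, π]
  set k : ℤ := round (t / (2 * π)) with hk
  set s : ℝ := t - 2 * π * k with hsdef
  have hs_eq : ∀ n : ℕ, Real.sin (n * t) = Real.sin (n * s) := by
    intro n
    have : (n:ℝ) * t = (n:ℝ) * s + (n * k : ℤ) * (2 * π) := by
      push_cast; rw [hsdef]; ring
    rw [this, Real.sin_add_int_mul_two_pi]
  have habs : |s| ≤ π := by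
    have h1 : |t / (2*π) - k| ≤ 1/2 := abs_sub_round _
    have : s = (t / (2*π) - k) * (2*π) := by field_simp; exact hsdef
    rw [this, abs_mul, abs_of_nonneg (by positivity : (0:ℝ) ≤ 2*π)]
    nlinarith [abs_nonneg (t / (2*π) - k)]
  simp only [hs_eq]
  rcases eq_or_ne s 0 with hs0 | hs0
  · simp [hs0]
    positivity
  have habs0 : 0 < |s| := abs_pos.mpr hs0
  -- Jordan inequality
  have hjordan : |s| / π ≤ |Real.sin (s/2)| := by
    have h1 : |Real.sin (s/2)| = Real.sin (|s|/2) := by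
      rcases lt_or_gt_of_ne hs0 with h | h
      · rw [abs_of_neg h, abs_of_nonpos, ← Real.sin_neg]
        · ring_nf
        · apply Real.sin_nonpos_of_nonpos_of_neg_pi_le
          · linarith
          · nlinarith [abs_of_neg h, habs]
      · rw [abs_of_pos h, abs_of_nonneg]
        apply Real.sin_nonneg_of_nonneg_of_le_pi
        · linarith
        · nlinarith [abs_of_pos h, habs]
    rw [h1]
    have := Real.mul_le_sin (x := |s|/2) (by positivity) (by linarith)
    calc |s| / π = 2 / π * (|s| / 2) := by field_simp
      _ ≤ Real.sin (|s|/2) := this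
  have hs2 : Real.sin (s/2) ≠ 0 := by
    intro hc
    rw [hc, abs_zero] at hjordan
    nlinarith [div_pos habs0 hπ]
  have hApos : 0 < |Real.sin (s/2)| := abs_pos.mpr hs2
  have hAbound : 1 / |Real.sin (s/2)| ≤ π / |s| := by
    rw [div_le_div_iff₀ hApos habs0]
    have hcanc : π * (|s| / π) = |s| := by field_simp
    nlinarith [mul_le_mul_of_nonneg_left hjordan (le_of_lt hπ)]
  set M : ℕ := ⌈1/|s|⌉₊ with hM
  have hM0 : 0 < M := Nat.ceil_pos.mpr (by positivity)
  have hMle : (M:ℝ) ≤ 1/|s| + 1 := le_of_lt (Nat.ceil_lt_add_one (by positivity))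
  have hMge : 1/|s| ≤ (M:ℝ) := Nat.le_ceil _
  have hsmall : ∀ K : ℕ, K ≤ M → |∑ n ∈ Finset.Icc 1 K, Real.sin (n * s) / n| ≤ 1 + π := by
    intro K hK
    calc |∑ n ∈ Finset.Icc 1 K, Real.sin (n * s) / n| ≤ K * |s| := small_part_bound s K
      _ ≤ M * |s| := by
          have : (K:ℝ) ≤ M := by exact_mod_cast hK
          nlinarith
      _ ≤ (1/|s| + 1) * |s| := by nlinarith
      _ = 1 + |s| := by field_simp
      _ ≤ 1 + π := by linarith
  rcases le_or_gt N M with hNM | hNM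
  · calc |∑ n ∈ Finset.Icc 1 N, Real.sin (n * s) / n| ≤ 1 + π := hsmall N hNM
      _ ≤ 1 + 3 * π := by linarith
  · -- split
    have hsplit : ∑ n ∈ Finset.Icc 1 N, Real.sin (n * s) / n
        = ∑ n ∈ Finset.Icc 1 M, Real.sin (n * s) / n
          + ∑ n ∈ Finset.Ioc M N, Real.sin (n * s) / n := by
      have h1 : Finset.Icc 1 N = Finset.Ioc 0 N := by ext x; simp; omega
      have h2 : Finset.Icc 1 M = Finset.Ioc 0 M := by ext x; simp; omega
      rw [h1, h2, Finset.sum_Ioc_consecutive _ (by omega) (by omega)]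
    rw [hsplit]
    have hB : |∑ n ∈ Finset.Ioc M N, Real.sin (n * s) / n| ≤ 2 * π := by
      calc |∑ n ∈ Finset.Ioc M N, Real.sin (n * s) / n|
          ≤ 2 * (1 / |Real.sin (s/2)|) / (M+1) := abel_bound s hs2 M N hM0
        _ ≤ 2 * (π / |s|) / (M+1) := by gcongr
        _ ≤ 2 * π := by
            rw [div_le_iff₀ (by positivity)]
            have h1 : 1/|s| ≤ (M:ℝ) + 1 := by linarith
            have h2 : π / |s| ≤ π * ((M:ℝ)+1) := by
              rw [div_le_iff₀ habs0]
              nlinarith [(div_le_iff₀ habs0).mp h1]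
            nlinarith
    calc |∑ n ∈ Finset.Icc 1 M, Real.sin (n * s) / n
          + ∑ n ∈ Finset.Ioc M N, Real.sin (n * s) / n|
        ≤ |∑ n ∈ Finset.Icc 1 M, Real.sin (n * s) / n|
          + |∑ n ∈ Finset.Ioc M N, Real.sin (n * s) / n| := abs_add_le _ _
      _ ≤ (1 + π) + 2 * π := add_le_add (hsmall M le_rfl) hB
      _ = 1 + 3 * π := by ring

lemma den_pos (a θ : ℝ) (ha0 : 0 < a) (ha1 : a < 1) :
    0 < 1 - 2*a*Real.cos θ + a^2 := by
  nlinarith [Real.cos_le_one θ, sq_nonneg (1-a),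
    mul_le_mul_of_nonneg_left (Real.cos_le_one θ) (by linarith : (0:ℝ) ≤ 2*a)]

lemma hasSum_F (a θ : ℝ) (ha0 : 0 < a) (ha1 : a < 1) :
    HasSum (fun m : ℕ => -2 * a^(m+1) * Real.sin ((m+1) * θ))
      (-2 * a * Real.sin θ / (1 - 2*a*Real.cos θ + a^2)) := by
  have hD := den_pos a θ ha0 ha1
  set z : ℂ := (a:ℂ) * Complex.exp (θ * Complex.I) with hz
  have hnorm : ‖z‖ < 1 := by
    rw [hz, norm_mul, Complex.norm_exp_ofReal_mul_I]
    simpa [Complex.norm_real, abs_of_pos ha0] using ha1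
  have h1 : HasSum (fun m : ℕ => z ^ m) (1 - z)⁻¹ := hasSum_geometric_of_norm_lt_one hnorm
  have h2 : HasSum (fun m : ℕ => z ^ (m+1)) (z * (1 - z)⁻¹) := by
    have := h1.mul_left z
    simpa [pow_succ, mul_comm] using this
  have h3 : HasSum (fun m : ℕ => (z ^ (m+1)).im) ((z * (1 - z)⁻¹).im) :=
    Complex.imCLM.hasSum h2
  have hterm : ∀ m : ℕ, (z ^ (m+1)).im = a^(m+1) * Real.sin ((m+1) * θ) := by
    intro m
    rw [hz, mul_pow, ← Complex.ofReal_pow, ← Complex.exp_nat_mul]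
    rw [show ((m+1 : ℕ):ℂ) * ((θ:ℝ) * Complex.I) = (((m+1 : ℕ) * θ : ℝ):ℂ) * Complex.I by
      push_cast; ring]
    rw [Complex.im_ofReal_mul, Complex.exp_ofReal_mul_I_im]
    push_cast; ring
  have hre : z.re = a * Real.cos θ := by
    rw [hz, Complex.re_ofReal_mul, Complex.exp_ofReal_mul_I_re]
  have him : z.im = a * Real.sin θ := by
    rw [hz, Complex.im_ofReal_mul, Complex.exp_ofReal_mul_I_im]
  have h1re : (1 - z).re = 1 - a * Real.cos θ := by
    rw [Complex.sub_re, Complex.one_re, hre]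
  have h1im : (1 - z).im = -(a * Real.sin θ) := by
    rw [Complex.sub_im, Complex.one_im, him]; ring
  have hnormSq : Complex.normSq (1 - z) = 1 - 2*a*Real.cos θ + a^2 := by
    rw [Complex.normSq_apply, h1re, h1im]
    linear_combination (a^2) * (Real.sin_sq_add_cos_sq θ)
  have hsum : (z * (1 - z)⁻¹).im = a * Real.sin θ / (1 - 2*a*Real.cos θ + a^2) := by
    rw [← div_eq_mul_inv, Complex.div_im, hnormSq, h1re, h1im, hre, him]
    field_simp
    ring
  rw [hsum] at h3
  have h4 := h3.mul_left (-2 : ℝ)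
  have heq : (fun m : ℕ => -2 * a^(m+1) * Real.sin ((m+1) * θ))
      = fun i : ℕ => -2 * (z ^ (i+1)).im := by
    funext m; rw [hterm m]; ring
  rw [heq, show -2*a*Real.sin θ / (1-2*a*Real.cos θ + a^2)
      = -2 * (a*Real.sin θ/(1-2*a*Real.cos θ+a^2)) by ring]
  exact h4

lemma integral_exp_int (k : ℤ) :
    (∫ x in (0:ℝ)..1, Complex.exp (2*π*Complex.I*k*x)) = if k = 0 then 1 else 0 := by
  rcases eq_or_ne k 0 with hk | hk
  · subst hk
    simp
  · rw [if_neg hk]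
    have hc : (2*π*Complex.I*k : ℂ) ≠ 0 := by
      simp [Complex.I_ne_zero, Real.pi_ne_zero, hk]
    have : ∀ x : ℝ, Complex.exp (2*π*Complex.I*k*x) = Complex.exp ((2*π*Complex.I*k) * x) := by
      intro x; ring_nf
    rw [intervalIntegral.integral_congr (fun x _ => this x), integral_exp_mul_complex hc]
    have h1 : (2*π*Complex.I*(k:ℂ)) * (1:ℝ) = (k:ℂ) * (2*π*Complex.I) := by push_cast; ring
    have h2 : (2*π*Complex.I*(k:ℂ)) * ((0:ℝ):ℂ) = 0 := by push_cast; ring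
    rw [h1, h2, Complex.exp_zero, Complex.exp_int_mul_two_pi_mul_I]
    simp

lemma key_sin_exp (t : ℝ) : ((-2*Real.sin t : ℝ):ℂ)
    = Complex.I * (Complex.exp (t*Complex.I) - Complex.exp (-(t:ℂ)*Complex.I)) := by
  rw [Complex.exp_mul_I, Complex.exp_mul_I, Complex.cos_neg, Complex.sin_neg]
  push_cast
  ring_nf
  rw [Complex.I_sq]
  ring

lemma integral_g (a : ℝ) (n : ℤ) (m : ℕ) :
    (∫ x in (0:ℝ)..1, (((-2*a^(m+1)*Real.sin (((m:ℝ)+1)*(2*π*x))) : ℝ) : ℂ)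
        * Complex.exp (-2*π*Complex.I*n*x))
    = Complex.I * (a:ℂ)^(m+1) * ((if ((m:ℤ)+1) - n = 0 then 1 else 0)
        - (if -((m:ℤ)+1) - n = 0 then 1 else 0)) := by
  set k₁ : ℤ := ((m:ℤ)+1) - n with hk₁
  set k₂ : ℤ := -((m:ℤ)+1) - n with hk₂
  have hpt : Set.EqOn (fun x : ℝ => (((-2*a^(m+1)*Real.sin (((m:ℝ)+1)*(2*π*x))) : ℝ) : ℂ)
      * Complex.exp (-2*π*Complex.I*n*x))
      (fun x : ℝ => Complex.I * (a:ℂ)^(m+1) *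
        (Complex.exp (2*π*Complex.I*k₁*x) - Complex.exp (2*π*Complex.I*k₂*x)))
      (Set.uIcc (0:ℝ) 1) := by
    intro x _
    simp only
    set T : ℝ := ((m:ℝ)+1)*(2*π*x) with hT
    have h1 : ((-2*a^(m+1)*Real.sin T : ℝ):ℂ) = (a:ℂ)^(m+1) * ((-2*Real.sin T : ℝ):ℂ) := by
      push_cast; ring
    rw [h1, key_sin_exp T]
    have h2 : ((T:ℂ))*Complex.I + (-2*π*Complex.I*n*x) = 2*π*Complex.I*k₁*x := by
      rw [hT, hk₁]; push_cast; ring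
    have h3 : (-(T:ℂ))*Complex.I + (-2*π*Complex.I*n*x) = 2*π*Complex.I*k₂*x := by
      rw [hT, hk₂]; push_cast; ring
    rw [← h2, ← h3, Complex.exp_add, Complex.exp_add]
    ring
  rw [intervalIntegral.integral_congr hpt]
  have hint : ∀ k : ℤ, IntervalIntegrable (fun x : ℝ => Complex.exp (2*π*Complex.I*k*x))
      MeasureTheory.volume 0 1 := by
    intro k
    apply Continuous.intervalIntegrable
    fun_prop
  rw [intervalIntegral.integral_const_mul, intervalIntegral.integral_sub (hint k₁) (hint k₂),
    integral_exp_int k₁, integral_exp_int k₂]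

theorem stmt16 (a : ℝ) (ha0 : 0 < a) (ha1 : a < 1) :
    let F : ℝ → ℝ := fun x => -2 * a * Real.sin (2 * π * x) /
      (1 - 2 * a * Real.cos (2 * π * x) + a ^ 2)
    ContDiff ℝ 2 F ∧
    (∫ x in (0 : ℝ)..1, F x) = 0 ∧
    (∀ n : ℤ, (∫ x in (0 : ℝ)..1, (F x : ℂ) * Complex.exp (-2 * π * Complex.I * n * x)) =
      if 0 < n then Complex.I * (a : ℂ) ^ n.natAbs
      else if n < 0 then -Complex.I * (a : ℂ) ^ n.natAbs
      else 0) ∧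
    ∀ α : ℝ, Irrational α → ∃ K : ℝ, ∀ N : ℕ,
      |∑ n ∈ Finset.Icc 1 N, F (n * α) / n| ≤ K := by
  intro F
  have hπ := Real.pi_pos
  have hD : ∀ x : ℝ, 0 < 1 - 2 * a * Real.cos (2 * π * x) + a ^ 2 :=
    fun x => den_pos a (2*π*x) ha0 ha1
  have hlin2 : ContDiff ℝ 2 (fun x:ℝ => 2*π*x) := contDiff_const.mul contDiff_id
  have hcont2 : ContDiff ℝ 2 F := by
    apply ContDiff.div
    · exact contDiff_const.mul (Real.contDiff_sin.comp hlin2)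
    · exact (contDiff_const.sub (contDiff_const.mul (Real.contDiff_cos.comp hlin2))).add
        contDiff_const
    · exact fun x => (hD x).ne'
  refine ⟨hcont2, ?_, ?_, ?_⟩
  · -- integral zero
    set G : ℝ → ℝ := fun x => -(1/(2*π)) * Real.log (1 - 2*a*Real.cos (2*π*x) + a^2)
      with hGdef
    have hG : ∀ x : ℝ, HasDerivAt G (F x) x := by
      intro x
      have hlin : HasDerivAt (fun y:ℝ => 2*π*y) (2*π) x := by
        simpa using (hasDerivAt_id x).const_mul (2*π)
      have hcos : HasDerivAt (fun y:ℝ => Real.cos (2*π*y)) (-Real.sin (2*π*x) * (2*π)) x :=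
        (Real.hasDerivAt_cos (2*π*x)).comp x hlin
      have hden : HasDerivAt (fun y:ℝ => 1 - 2*a*Real.cos (2*π*y) + a^2)
          (0 - 2*a*(-Real.sin (2*π*x) * (2*π)) + 0) x :=
        ((hasDerivAt_const x 1).sub (hcos.const_mul (2*a))).add (hasDerivAt_const x (a^2))
      have hlog := (hden.log (hD x).ne')
      have := hlog.const_mul (-(1/(2*π)))
      refine this.congr_deriv ?_
      symm
      show F x = _
      rw [show (0 - 2*a*(-Real.sin (2*π*x) * (2*π)) + 0) = (2*π) * (2*a*Real.sin (2*π*x))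
          from by ring, mul_div_assoc, ← mul_assoc,
        show -(1/(2*π)) * (2*π) = -1 from by field_simp]
      ring
    rw [intervalIntegral.integral_eq_sub_of_hasDerivAt (fun x _ => hG x)
      (hcont2.continuous.intervalIntegrable 0 1)]
    rw [hGdef]
    norm_num [Real.cos_two_pi]
  · -- Fourier coefficients
    intro n
    set g : ℕ → ℝ → ℂ := fun m x =>
      (((-2*a^(m+1)*Real.sin (((m:ℝ)+1)*(2*π*x))) : ℝ) : ℂ) * Complex.exp (-2*π*Complex.I*n*x)
      with hgdef
    have hgcont : ∀ m, Continuous (g m) := by intro m; fun_prop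
    have key : ∀ x : ℝ, HasSum (fun m : ℕ => g m x)
        ((F x : ℂ) * Complex.exp (-2*π*Complex.I*n*x)) := by
      intro x
      have h := hasSum_F a (2*π*x) ha0 ha1
      have h2 := Complex.ofRealCLM.hasSum h
      exact h2.mul_right _
    have hle : (0:ℝ) ≤ 1 := by norm_num
    rw [intervalIntegral.integral_of_le hle]
    rw [MeasureTheory.setIntegral_congr_fun measurableSet_Ioc
      (fun x _ => ((key x).tsum_eq).symm)]
    have hInt : ∀ m : ℕ, MeasureTheory.Integrable (g m)
        (MeasureTheory.volume.restrict (Set.Ioc (0:ℝ) 1)) :=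
      fun m => (hgcont m).integrableOn_Ioc
    have hgbound : ∀ m : ℕ, ∀ x : ℝ, ‖g m x‖ ≤ 2*a^(m+1) := by
      intro m x
      rw [hgdef]
      simp only
      rw [norm_mul, Complex.norm_real]
      have h1 : ‖Complex.exp (-2*π*Complex.I*n*x)‖ = 1 := by
        rw [Complex.norm_exp]
        have : (-2*π*Complex.I*n*x).re = 0 := by simp
        rw [this, Real.exp_zero]
      rw [h1, mul_one, Real.norm_eq_abs, abs_mul]
      have h2 : |(-2)*a^(m+1)| = 2*a^(m+1) := by
        rw [abs_mul]
        simp [abs_of_pos (pow_pos ha0 (m+1))]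
      calc |(-2)*a^(m+1)| * |Real.sin (((m:ℝ)+1)*(2*π*x))|
          ≤ |(-2)*a^(m+1)| * 1 := by
            exact mul_le_mul_of_nonneg_left (Real.abs_sin_le_one _) (abs_nonneg _)
        _ = 2*a^(m+1) := by rw [mul_one, h2]
    have hSum : Summable (fun m : ℕ => ∫ x in Set.Ioc (0:ℝ) 1, ‖g m x‖) := by
      have hle2 : ∀ m : ℕ, (∫ x in Set.Ioc (0:ℝ) 1, ‖g m x‖) ≤ 2*a^(m+1) := by
        intro m
        calc (∫ x in Set.Ioc (0:ℝ) 1, ‖g m x‖)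
            ≤ ∫ x in Set.Ioc (0:ℝ) 1, 2*a^(m+1) := by
              apply MeasureTheory.setIntegral_mono_on (hInt m).norm
                (MeasureTheory.integrableOn_const (by simp))
                measurableSet_Ioc (fun x _ => hgbound m x)
          _ = 2*a^(m+1) := by
              rw [MeasureTheory.setIntegral_const]
              simp
      have hgeo : Summable (fun m : ℕ => 2*a^(m+1)) := by
        refine ((summable_geometric_of_lt_one ha0.le ha1).mul_left (2*a)).congr fun m => ?_
        rw [pow_succ]
        ring
      exact Summable.of_nonneg_of_le
        (fun m => MeasureTheory.integral_nonneg (fun x => norm_nonneg _)) hle2 hgeo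
    rw [← MeasureTheory.integral_tsum_of_summable_integral_norm hInt hSum]
    have hval : ∀ m : ℕ, (∫ x in Set.Ioc (0:ℝ) 1, g m x)
        = Complex.I * (a:ℂ)^(m+1) * ((if ((m:ℤ)+1) - n = 0 then 1 else 0)
          - (if -((m:ℤ)+1) - n = 0 then 1 else 0)) := by
      intro m
      rw [← intervalIntegral.integral_of_le hle]
      exact integral_g a n m
    rw [tsum_congr hval]
    rcases lt_trichotomy n 0 with hn | hn | hn
    · rw [if_neg (by omega), if_pos hn]
      rw [tsum_eq_single (n.natAbs - 1) ?_]
      · have h1 : ((n.natAbs - 1 : ℕ) : ℤ) + 1 - n ≠ 0 := by omega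
        have h2 : -(((n.natAbs - 1 : ℕ) : ℤ) + 1) - n = 0 := by omega
        rw [if_neg h1, if_pos h2]
        have h3 : (n.natAbs - 1) + 1 = n.natAbs := by omega
        rw [h3]
        ring
      · intro m hm
        have h1 : ((m:ℤ)+1) - n ≠ 0 := by omega
        have h2 : -((m:ℤ)+1) - n ≠ 0 := by
          intro hc
          apply hm
          omega
        rw [if_neg h1, if_neg h2]
        ring
    · subst hn
      rw [if_neg (by omega), if_neg (by omega)]
      have : ∀ m : ℕ, Complex.I * (a:ℂ)^(m+1) * ((if ((m:ℤ)+1) - 0 = 0 then 1 else 0)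
          - (if -((m:ℤ)+1) - 0 = 0 then (1:ℂ) else 0)) = 0 := by
        intro m
        rw [if_neg (by omega), if_neg (by omega)]
        ring
      rw [tsum_congr this, tsum_zero]
    · rw [if_pos hn]
      rw [tsum_eq_single (n.natAbs - 1) ?_]
      · have h1 : ((n.natAbs - 1 : ℕ) : ℤ) + 1 - n = 0 := by omega
        have h2 : -(((n.natAbs - 1 : ℕ) : ℤ) + 1) - n ≠ 0 := by omega
        rw [if_pos h1, if_neg h2]
        have h3 : (n.natAbs - 1) + 1 = n.natAbs := by omega
        rw [h3]
        ring
      · intro m hm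
        have h1 : ((m:ℤ)+1) - n ≠ 0 := by
          intro hc
          apply hm
          omega
        have h2 : -((m:ℤ)+1) - n ≠ 0 := by omega
        rw [if_neg h1, if_neg h2]
        ring
  · -- bounded ergodic sums
    intro α _
    refine ⟨2*(1+3*π)*a*(1-a)⁻¹, fun N => ?_⟩
    have hsummable : ∀ n : ℕ, Summable (fun m : ℕ =>
        (-2*a^(m+1)*Real.sin (((m:ℝ)+1)*(2*π*((n:ℝ)*α)))) / n) :=
      fun n => ((hasSum_F a (2*π*((n:ℝ)*α)) ha0 ha1).summable).div_const _
    have hswap : ∑ n ∈ Finset.Icc 1 N, F ((n:ℝ) * α) / (n:ℝ)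
        = ∑' m : ℕ, ∑ n ∈ Finset.Icc 1 N,
            (-2*a^(m+1)*Real.sin (((m:ℝ)+1)*(2*π*((n:ℝ)*α)))) / n := by
      rw [Summable.tsum_finsetSum (fun n _ => hsummable n)]
      refine Finset.sum_congr rfl fun n _ => ?_
      rw [tsum_div_const, ((hasSum_F a (2*π*((n:ℝ)*α)) ha0 ha1).tsum_eq)]
    rw [hswap]
    have hbound : ∀ m : ℕ, ‖∑ n ∈ Finset.Icc 1 N,
        (-2*a^(m+1)*Real.sin (((m:ℝ)+1)*(2*π*((n:ℝ)*α)))) / n‖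
        ≤ (2*(1+3*π)*a) * a^m := by
      intro m
      have heq : ∑ n ∈ Finset.Icc 1 N, (-2*a^(m+1)*Real.sin (((m:ℝ)+1)*(2*π*((n:ℝ)*α)))) / n
          = -2*a^(m+1) * ∑ n ∈ Finset.Icc 1 N, Real.sin ((n:ℝ) * (2*π*((m:ℝ)+1)*α)) / n := by
        rw [Finset.mul_sum]
        refine Finset.sum_congr rfl fun n _ => ?_
        rw [show ((m:ℝ)+1)*(2*π*((n:ℝ)*α)) = (n:ℝ) * (2*π*((m:ℝ)+1)*α) by ring]
        ring
      rw [heq, Real.norm_eq_abs, abs_mul]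
      have h2 : |(-2)*a^(m+1)| = 2*a^(m+1) := by
        rw [abs_mul]; simp [abs_of_pos (pow_pos ha0 (m+1))]
      rw [h2]
      calc 2*a^(m+1) * |∑ n ∈ Finset.Icc 1 N, Real.sin ((n:ℝ) * (2*π*((m:ℝ)+1)*α)) / n|
          ≤ 2*a^(m+1) * (1+3*π) := by
            apply mul_le_mul_of_nonneg_left (sin_sum_bound _ N) (by positivity)
        _ = (2*(1+3*π)*a) * a^m := by rw [pow_succ]; ring
    have hg2 : HasSum (fun m : ℕ => (2*(1+3*π)*a) * a^m) (2*(1+3*π)*a*(1-a)⁻¹) :=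
      (hasSum_geometric_of_lt_one ha0.le ha1).mul_left _
    calc |∑' m : ℕ, ∑ n ∈ Finset.Icc 1 N,
          (-2*a^(m+1)*Real.sin (((m:ℝ)+1)*(2*π*((n:ℝ)*α)))) / n|
        ≤ 2*(1+3*π)*a*(1-a)⁻¹ := tsum_of_norm_bounded hg2 hbound
end

section
/- The partial sine sums ∑_{n=1}^N sin(2πnt)/n are uniformly bounded: there exists a constant K such that |∑_{n=1}^N sin(2πnt)/n| ≤ K for all N ∈ ℕ and all t ∈ ℝ. -/
open Real Finset

/-- Telescoping sum over `Ico`. -/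
lemma tele_Ico (a b : ℕ) (hab : a ≤ b) (f : ℕ → ℝ) :
    ∑ i ∈ Finset.Ico a b, (f i - f (i+1)) = f a - f b := by
  rw [Finset.sum_Ico_eq_sub _ hab, Finset.sum_range_sub' f, Finset.sum_range_sub' f]
  ring

/-- Dirichlet kernel bound. -/
lemma dirichlet (t : ℝ) (h : Real.sin (π * t) ≠ 0) (k : ℕ) :
    |∑ n ∈ Finset.range k, Real.sin (2 * π * n * t)| ≤ 1 / |Real.sin (π * t)| := by
  set s := Real.sin (π * t) with hs
  have key : ∀ n : ℕ, Real.sin (2 * π * n * t) * (2 * s) =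
      Real.cos ((2*(n:ℝ)-1)*(π*t)) - Real.cos ((2*((n:ℝ)+1)-1)*(π*t)) := by
    intro n
    have h1 : (((2*(n:ℝ)-1)*(π*t)) + ((2*((n:ℝ)+1)-1)*(π*t)))/2 = 2*π*n*t := by ring
    have h2 : (((2*(n:ℝ)-1)*(π*t)) - ((2*((n:ℝ)+1)-1)*(π*t)))/2 = -(π*t) := by ring
    rw [Real.cos_sub_cos, h1, h2, Real.sin_neg, hs]
    ring
  have tele := Finset.sum_range_sub' (fun n : ℕ => Real.cos ((2*(n:ℝ)-1)*(π*t))) k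
  push_cast at tele
  have hsum : (∑ n ∈ Finset.range k, Real.sin (2 * π * n * t)) * (2 * s) =
      Real.cos ((2*(0:ℝ)-1)*(π*t)) - Real.cos ((2*(k:ℝ)-1)*(π*t)) := by
    rw [Finset.sum_mul]
    simp_rw [key]
    convert tele using 2
  have habs : |∑ n ∈ Finset.range k, Real.sin (2 * π * n * t)| * (2 * |s|) ≤ 2 := by
    have h2 : |(∑ n ∈ Finset.range k, Real.sin (2 * π * n * t)) * (2 * s)| ≤ 2 := by
      rw [hsum]
      calc |Real.cos ((2*(0:ℝ)-1)*(π*t)) - Real.cos ((2*(k:ℝ)-1)*(π*t))|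
          ≤ |Real.cos ((2*(0:ℝ)-1)*(π*t))| + |Real.cos ((2*(k:ℝ)-1)*(π*t))| := abs_sub _ _
        _ ≤ 1 + 1 := add_le_add (Real.abs_cos_le_one _) (Real.abs_cos_le_one _)
        _ = 2 := by norm_num
    calc |∑ n ∈ Finset.range k, Real.sin (2 * π * n * t)| * (2 * |s|)
        = |(∑ n ∈ Finset.range k, Real.sin (2 * π * n * t)) * (2 * s)| := by
          rw [abs_mul, abs_mul, abs_two]
      _ ≤ 2 := h2
  have hspos : 0 < |s| := abs_pos.mpr h
  rw [le_div_iff₀ hspos]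
  nlinarith [abs_nonneg (∑ n ∈ Finset.range k, Real.sin (2 * π * n * t))]

/-- Termwise bound for the first part. -/
lemma part1 (t : ℝ) (k : ℕ) :
    |∑ n ∈ Finset.Icc 1 k, Real.sin (2 * π * n * t) / n| ≤ 2 * π * |t| * k := by
  calc |∑ n ∈ Finset.Icc 1 k, Real.sin (2 * π * n * t) / n|
      ≤ ∑ n ∈ Finset.Icc 1 k, |Real.sin (2 * π * n * t) / n| :=
        Finset.abs_sum_le_sum_abs _ _
    _ ≤ ∑ _n ∈ Finset.Icc 1 k, 2 * π * |t| := by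
        apply Finset.sum_le_sum
        intro n hn
        have hn1 : 1 ≤ n := (Finset.mem_Icc.mp hn).1
        have hnpos : (0:ℝ) < n := by exact_mod_cast Nat.pos_of_ne_zero (by omega)
        have h1 : |Real.sin (2 * π * n * t)| ≤ 2 * π * n * |t| := by
          calc |Real.sin (2 * π * n * t)| ≤ |2 * π * n * t| := Real.abs_sin_le_abs
            _ = 2 * π * n * |t| := by
                rw [abs_mul, abs_of_nonneg (by positivity : (0:ℝ) ≤ 2 * π * n)]
        rw [abs_div, abs_of_pos hnpos, div_le_iff₀ hnpos]
        nlinarith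
    _ = 2 * π * |t| * k := by
        rw [Finset.sum_const, Nat.card_Icc]
        simp [mul_comm]

/-- Main bound for `|t| ≤ 1/2`. -/
lemma bounded_half (N : ℕ) (t : ℝ) (ht : |t| ≤ 1/2) :
    |∑ n ∈ Finset.Icc 1 N, Real.sin (2 * π * n * t) / n| ≤ 2 * π + 3 := by
  rcases eq_or_ne t 0 with rfl | ht0
  · simp
    positivity
  · have htpos : 0 < |t| := abs_pos.mpr ht0
    set δ := |Real.sin (π * t)| with hδ
    have hδ2 : 2 * |t| ≤ δ := by
      have hb : |π * t| ≤ π / 2 := by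
        rw [abs_mul, abs_of_pos Real.pi_pos]
        nlinarith [Real.pi_pos]
      have h := Real.mul_abs_le_abs_sin hb
      rw [abs_mul, abs_of_pos Real.pi_pos] at h
      calc 2 * |t| = 2 / π * (π * |t|) := by field_simp
        _ ≤ δ := h
    have hδpos : 0 < δ := lt_of_lt_of_le (by positivity) hδ2
    have hsne : Real.sin (π * t) ≠ 0 := by
      intro hc
      rw [hδ, hc, abs_zero] at hδpos
      exact lt_irrefl _ hδpos
    set m := ⌈δ⁻¹⌉₊ with hm
    have hm1 : δ⁻¹ ≤ (m:ℝ) := Nat.le_ceil _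
    have hmδ : (m:ℝ) ≤ δ⁻¹ + 1 := le_of_lt (Nat.ceil_lt_add_one (by positivity))
    -- bound for the initial segment of length k ≤ m
    have hpart1 : ∀ k : ℕ, k ≤ m →
        |∑ n ∈ Finset.Icc 1 k, Real.sin (2 * π * n * t) / n| ≤ 2 * π := by
      intro k hk
      have h0 := part1 t k
      have hkm : (k:ℝ) ≤ (m:ℝ) := by exact_mod_cast hk
      have hi : δ⁻¹ ≤ (2 * |t|)⁻¹ := by
        apply inv_anti₀ (by positivity) hδ2
      have htm : |t| * (m:ℝ) ≤ 1 := by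
        have h3 : |t| * (m:ℝ) ≤ |t| * (δ⁻¹ + 1) := by nlinarith
        have h4 : |t| * δ⁻¹ ≤ |t| * (2*|t|)⁻¹ := by nlinarith
        have h5 : |t| * (2*|t|)⁻¹ = 1/2 := by
          rw [mul_inv, ← mul_assoc, mul_comm (|t|), mul_assoc,
            mul_inv_cancel₀ (ne_of_gt htpos)]
          norm_num
        nlinarith
      have h6 : |t| * (k:ℝ) ≤ |t| * (m:ℝ) := by nlinarith
      calc |∑ n ∈ Finset.Icc 1 k, Real.sin (2 * π * n * t) / n|
          ≤ 2 * π * |t| * k := h0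
        _ ≤ 2 * π := by nlinarith [Real.pi_pos]
    rcases le_or_gt N m with hNm | hmN
    · calc |∑ n ∈ Finset.Icc 1 N, Real.sin (2 * π * n * t) / n|
          ≤ 2 * π := hpart1 N hNm
        _ ≤ 2 * π + 3 := by linarith
    · -- split the sum
      have hsplit : ∑ n ∈ Finset.Icc 1 N, Real.sin (2 * π * n * t) / n
          = (∑ n ∈ Finset.Icc 1 m, Real.sin (2 * π * n * t) / n)
            + ∑ n ∈ Finset.Ioc m N, Real.sin (2 * π * n * t) / n := by
        rw [show Finset.Icc 1 N = Finset.Ioc 0 N from rfl,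
            show Finset.Icc 1 m = Finset.Ioc 0 m from rfl]
        exact (Finset.sum_Ioc_consecutive _ (Nat.zero_le m) hmN.le).symm
      set G : ℕ → ℝ := fun k => ∑ i ∈ Finset.range k, Real.sin (2 * π * i * t) with hGdef
      have hG : ∀ k : ℕ, |G k| ≤ δ⁻¹ := by
        intro k
        have h := dirichlet t hsne k
        rwa [one_div] at h
      have hmpos : 0 < m := Nat.ceil_pos.mpr (by positivity)
      have hm1R : (0:ℝ) < (m:ℝ) + 1 := by positivity
      have hNposR : (0:ℝ) < (N:ℝ) := by
        have : 0 < N := by omega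
        exact_mod_cast this
      have hNm1 : ((m:ℝ)+1) ≤ (N:ℝ) := by exact_mod_cast hmN
      have hinvN : ((N:ℝ))⁻¹ ≤ ((m:ℝ)+1)⁻¹ := inv_anti₀ hm1R hNm1
      have hδinv_nonneg : (0:ℝ) ≤ δ⁻¹ := by positivity
      have hprod : ((m:ℝ)+1)⁻¹ * δ⁻¹ ≤ 1 := by
        have h1 : δ⁻¹ ≤ (m:ℝ)+1 := by linarith
        have h2 := mul_le_mul_of_nonneg_left h1 (le_of_lt (inv_pos.mpr hm1R))
        rwa [inv_mul_cancel₀ (ne_of_gt hm1R)] at h2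
      -- Abel summation
      have byparts := Finset.sum_Ioc_by_parts (fun i : ℕ => ((i:ℝ))⁻¹)
        (fun i : ℕ => Real.sin (2 * π * i * t)) hmN
      simp only [smul_eq_mul] at byparts
      have htail : |∑ n ∈ Finset.Ioc m N, Real.sin (2 * π * n * t) / n| ≤ 3 := by
        have hrw : ∑ n ∈ Finset.Ioc m N, Real.sin (2 * π * n * t) / n
            = ∑ n ∈ Finset.Ioc m N, ((n:ℝ))⁻¹ * Real.sin (2 * π * n * t) := by
          apply Finset.sum_congr rfl
          intro n _
          rw [div_eq_inv_mul]
        rw [hrw, byparts]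
        have e1 : |((N:ℝ))⁻¹ * G (N+1)| ≤ ((m:ℝ)+1)⁻¹ * δ⁻¹ := by
          rw [abs_mul, abs_of_nonneg (by positivity : (0:ℝ) ≤ ((N:ℝ))⁻¹)]
          exact mul_le_mul hinvN (hG _) (abs_nonneg _) (by positivity)
        have e2 : |((((m+1):ℕ)):ℝ)⁻¹ * G (m+1)| ≤ ((m:ℝ)+1)⁻¹ * δ⁻¹ := by
          rw [abs_mul]
          push_cast
          rw [abs_of_nonneg (by positivity : (0:ℝ) ≤ ((m:ℝ)+1)⁻¹)]
          exact mul_le_mul_of_nonneg_left (hG _) (by positivity)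
        have e3 : |∑ i ∈ Finset.Ioc m (N-1),
            (((((i+1):ℕ)):ℝ)⁻¹ - ((i:ℝ))⁻¹) * G (i+1)| ≤ ((m:ℝ)+1)⁻¹ * δ⁻¹ := by
          have hIoc : Finset.Ioc m (N-1) = Finset.Ico (m+1) N := by
            rw [← Finset.Ico_add_one_add_one_eq_Ioc]
            congr 1
            omega
          calc |∑ i ∈ Finset.Ioc m (N-1), (((((i+1):ℕ)):ℝ)⁻¹ - ((i:ℝ))⁻¹) * G (i+1)|
              ≤ ∑ i ∈ Finset.Ioc m (N-1), |(((((i+1):ℕ)):ℝ)⁻¹ - ((i:ℝ))⁻¹) * G (i+1)| :=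
                Finset.abs_sum_le_sum_abs _ _
            _ ≤ ∑ i ∈ Finset.Ioc m (N-1), (((i:ℝ))⁻¹ - ((((i+1):ℕ)):ℝ)⁻¹) * δ⁻¹ := by
                apply Finset.sum_le_sum
                intro i hi
                have hi1 : m < i := (Finset.mem_Ioc.mp hi).1
                have hipos : (0:ℝ) < (i:ℝ) := by
                  have : 0 < i := by omega
                  exact_mod_cast this
                have hmono : ((((i+1):ℕ)):ℝ)⁻¹ ≤ ((i:ℝ))⁻¹ := by
                  apply inv_anti₀ hipos
                  push_cast; linarith
                rw [abs_mul, abs_sub_comm, abs_of_nonneg (sub_nonneg.mpr hmono)]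
                exact mul_le_mul_of_nonneg_left (hG _) (sub_nonneg.mpr hmono)
            _ = (((((m+1):ℕ)):ℝ)⁻¹ - ((N:ℝ))⁻¹) * δ⁻¹ := by
                rw [← Finset.sum_mul, hIoc, tele_Ico (m+1) N hmN (fun i : ℕ => ((i:ℝ))⁻¹)]
            _ ≤ ((m:ℝ)+1)⁻¹ * δ⁻¹ := by
                apply mul_le_mul_of_nonneg_right _ hδinv_nonneg
                push_cast
                have : (0:ℝ) ≤ ((N:ℝ))⁻¹ := by positivity
                linarith
        calc |((N:ℝ))⁻¹ * G (N+1) - ((((m+1):ℕ)):ℝ)⁻¹ * G (m+1)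
              - ∑ i ∈ Finset.Ioc m (N-1), (((((i+1):ℕ)):ℝ)⁻¹ - ((i:ℝ))⁻¹) * G (i+1)|
            ≤ |((N:ℝ))⁻¹ * G (N+1) - ((((m+1):ℕ)):ℝ)⁻¹ * G (m+1)|
              + |∑ i ∈ Finset.Ioc m (N-1), (((((i+1):ℕ)):ℝ)⁻¹ - ((i:ℝ))⁻¹) * G (i+1)| :=
              abs_sub _ _
          _ ≤ |((N:ℝ))⁻¹ * G (N+1)| + |((((m+1):ℕ)):ℝ)⁻¹ * G (m+1)|
              + |∑ i ∈ Finset.Ioc m (N-1), (((((i+1):ℕ)):ℝ)⁻¹ - ((i:ℝ))⁻¹) * G (i+1)| := by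
              have := abs_sub (((N:ℝ))⁻¹ * G (N+1)) (((((m+1):ℕ)):ℝ)⁻¹ * G (m+1))
              linarith
          _ ≤ ((m:ℝ)+1)⁻¹ * δ⁻¹ + ((m:ℝ)+1)⁻¹ * δ⁻¹ + ((m:ℝ)+1)⁻¹ * δ⁻¹ := by
              linarith [e1, e2, e3]
          _ ≤ 3 := by linarith
      calc |∑ n ∈ Finset.Icc 1 N, Real.sin (2 * π * n * t) / n|
          ≤ |∑ n ∈ Finset.Icc 1 m, Real.sin (2 * π * n * t) / n|
            + |∑ n ∈ Finset.Ioc m N, Real.sin (2 * π * n * t) / n| := by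
            rw [hsplit]; exact abs_add_le _ _
        _ ≤ 2 * π + 3 := add_le_add (hpart1 m le_rfl) htail

theorem stmt17 : ∃ K : ℝ, ∀ (N : ℕ) (t : ℝ),
    |∑ n ∈ Finset.Icc 1 N, Real.sin (2 * π * n * t) / n| ≤ K := by
  refine ⟨2 * π + 3, fun N t => ?_⟩
  have hper : ∀ n : ℕ, Real.sin (2 * π * n * t) = Real.sin (2 * π * n * (t - round t)) := by
    intro n
    have h : 2 * π * n * t = 2 * π * n * (t - round t) + ((n * round t : ℤ) : ℝ) * (2 * π) := by
      push_cast
      ring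
    rw [h, Real.sin_add_int_mul_two_pi]
  simp_rw [hper]
  exact bounded_half N (t - round t) (abs_sub_round t)
end
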